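/- arXiv:math/0204179 — 4 statements merged into one kernel-verified Lean document; each statement's English description precedes it below -/
import Mathlib

section
/- Let f ∈ K[X] be a polynomial of degree d ≥ 2 with good reduction, let q ∈ 𝒪, and let 0 < s < 1. Then the set of periodic points ξ of f with |ξ − q| ≤ s is finite. -/
open Polynomial Function

set_option linter.unusedSectionVars false
set_option maxHeartbeats 1000000

namespace S8

variable {K : Type*} [NormedField K] [IsUltrametricDist K]

/-- All coefficients of `φ` have norm at most `t`. -/
def CB (t : ℝ) (φ : K[X]) : Prop := ∀ i, ‖φ.coeff i‖ ≤ t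

lemma CB.nonneg {t : ℝ} {φ : K[X]} (h : CB t φ) : 0 ≤ t :=
  le_trans (norm_nonneg _) (h 0)

lemma CB.mono {t t' : ℝ} {φ : K[X]} (h : CB t φ) (htt : t ≤ t') : CB t' φ :=
  fun i => (h i).trans htt

lemma CB.X : CB (1:ℝ) (X : K[X]) := by
  intro i
  rw [coeff_X]
  split_ifs <;> simp

lemma CB.C {t : ℝ} {c : K} (hc : ‖c‖ ≤ t) (ht : 0 ≤ t) : CB t (Polynomial.C c) := by
  intro i
  rw [coeff_C]
  split_ifs <;> simpa

lemma CB.one : CB (1:ℝ) (1 : K[X]) := by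
  intro i
  rw [coeff_one]
  split_ifs <;> simp

lemma CB.zero {t : ℝ} (ht : 0 ≤ t) : CB t (0 : K[X]) := by
  intro i; simpa using ht

lemma CB.add {t : ℝ} {φ ψ : K[X]} (hφ : CB t φ) (hψ : CB t ψ) : CB t (φ + ψ) := by
  intro i
  rw [coeff_add]
  exact le_trans (IsUltrametricDist.norm_add_le_max _ _) (max_le (hφ i) (hψ i))

lemma CB.neg {t : ℝ} {φ : K[X]} (hφ : CB t φ) : CB t (-φ) := by
  intro i; simpa using hφ i

lemma CB.sub {t : ℝ} {φ ψ : K[X]} (hφ : CB t φ) (hψ : CB t ψ) : CB t (φ - ψ) := by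
  rw [sub_eq_add_neg]; exact hφ.add hψ.neg

lemma CB.sum {ι : Type*} {F : Finset ι} {g : ι → K[X]} {t : ℝ} (ht : 0 ≤ t)
    (h : ∀ j ∈ F, CB t (g j)) : CB t (∑ j ∈ F, g j) := by
  intro i
  rw [Polynomial.finset_sum_coeff]
  exact IsUltrametricDist.norm_sum_le_of_forall_le_of_nonneg ht (fun j hj => h j hj i)

lemma CB.mul {a b : ℝ} {A B : K[X]} (hA : CB a A) (hB : CB b B) : CB (a * b) (A * B) := by
  intro n
  rw [Polynomial.coeff_mul]
  refine IsUltrametricDist.norm_sum_le_of_forall_le_of_nonneg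
    (mul_nonneg hA.nonneg hB.nonneg) ?_
  rintro ⟨i, j⟩ _
  rw [norm_mul]
  exact mul_le_mul (hA i) (hB j) (norm_nonneg _) hA.nonneg

lemma CB.pow {A : K[X]} (hA : CB 1 A) : ∀ n : ℕ, CB 1 (A ^ n)
  | 0 => by simpa using CB.one
  | (n + 1) => by
      have := (CB.pow hA n).mul hA
      rw [one_mul] at this
      simpa [pow_succ] using this

lemma CB.comp {φ ψ : K[X]} (hφ : CB 1 φ) (hψ : CB 1 ψ) : CB 1 (φ.comp ψ) := by
  rw [comp_eq_sum_left, Polynomial.sum_def]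
  refine CB.sum zero_le_one (fun e _ => ?_)
  have := (CB.C (hφ e) zero_le_one).mul (hψ.pow e)
  simpa using this

lemma CB.eval {t : ℝ} {φ : K[X]} (hφ : CB t φ) {x : K} (hx : ‖x‖ ≤ 1) :
    ‖φ.eval x‖ ≤ t := by
  rw [Polynomial.eval_eq_sum_range]
  refine IsUltrametricDist.norm_sum_le_of_forall_le_of_nonneg hφ.nonneg (fun i _ => ?_)
  rw [norm_mul]
  calc ‖φ.coeff i‖ * ‖x ^ i‖ ≤ t * 1 := by
        refine mul_le_mul (hφ i) ?_ (norm_nonneg _) hφ.nonneg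
        rw [norm_pow]
        exact pow_le_one₀ (norm_nonneg _) hx
    _ = t := mul_one t

lemma coeff_comp_C_mul_X (φ : K[X]) (c : K) (n : ℕ) :
    (φ.comp (Polynomial.C c * X)).coeff n = φ.coeff n * c ^ n := by
  rw [comp_eq_sum_left, Polynomial.sum_def, Polynomial.finset_sum_coeff]
  have h : ∀ e ∈ φ.support, (Polynomial.C (φ.coeff e) * (Polynomial.C c * X) ^ e).coeff n
      = if e = n then φ.coeff e * c ^ e else 0 := by
    intro e _
    rw [mul_pow, ← C_pow, ← mul_assoc, ← C_mul, coeff_C_mul, coeff_X_pow]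
    by_cases h : n = e
    · simp [h]
    · simp [h, Ne.symm h]
  rw [Finset.sum_congr rfl h, Finset.sum_ite_eq' φ.support n (fun e => φ.coeff e * c ^ e)]
  by_cases hn : n ∈ φ.support
  · simp [hn]
  · rw [Polynomial.notMem_support_iff] at hn
    simp [hn]

/-- strict domination: `‖b‖ < ‖a‖ → ‖a + b‖ = ‖a‖`. -/
lemma norm_add_eq_left {a b : K} (h : ‖b‖ < ‖a‖) : ‖a + b‖ = ‖a‖ := by
  have := IsUltrametricDist.norm_add_eq_max_of_norm_ne_norm (x := a) (y := b) (ne_of_gt h)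
  rw [this, max_eq_left h.le]

end S8

namespace S8

variable {K : Type*} [NormedField K] [IsUltrametricDist K]

section NatNorm

variable [CharZero K] {p : ℕ} (hp : p.Prime) (hpK : ‖(p : K)‖ = (p : ℝ)⁻¹)

include hp hpK

lemma norm_coprime {u : ℕ} (hu : ¬ p ∣ u) : ‖(u : K)‖ = 1 := by
  refine le_antisymm (IsUltrametricDist.norm_natCast_le_one K u) ?_
  by_contra hlt
  push_neg at hlt
  have hco : Nat.gcd u p = 1 := Nat.Coprime.gcd_eq_one (Nat.coprime_comm.mp (hp.coprime_iff_not_dvd.mpr hu))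
  have hb := Nat.gcd_eq_gcd_ab u p
  rw [hco] at hb
  have hbK : (1 : K) = (u : K) * ((Nat.gcdA u p : ℤ) : K) + (p : K) * ((Nat.gcdB u p : ℤ) : K) := by
    exact_mod_cast congrArg (fun z : ℤ => (z : K)) hb
  have h1 : (1 : ℝ) = ‖(u : K) * ((Nat.gcdA u p : ℤ) : K) + (p : K) * ((Nat.gcdB u p : ℤ) : K)‖ := by
    rw [← hbK, norm_one]
  have hu1 : ‖(u : K) * ((Nat.gcdA u p : ℤ) : K)‖ < 1 := by
    rw [norm_mul]
    calc ‖(u:K)‖ * ‖((Nat.gcdA u p : ℤ) : K)‖ ≤ ‖(u:K)‖ * 1 :=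
          mul_le_mul_of_nonneg_left (IsUltrametricDist.norm_intCast_le_one K _) (norm_nonneg _)
      _ = ‖(u:K)‖ := mul_one _
      _ < 1 := hlt
  have hp1 : ‖(p : K) * ((Nat.gcdB u p : ℤ) : K)‖ < 1 := by
    rw [norm_mul, hpK]
    have hppos : (0:ℝ) < (p:ℝ)⁻¹ := by
      rw [inv_pos]; exact_mod_cast hp.pos
    have hplt : (p:ℝ)⁻¹ < 1 := by
      rw [inv_lt_one_iff₀]; right; exact_mod_cast hp.one_lt
    calc (p:ℝ)⁻¹ * ‖((Nat.gcdB u p : ℤ) : K)‖ ≤ (p:ℝ)⁻¹ * 1 :=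
          mul_le_mul_of_nonneg_left (IsUltrametricDist.norm_intCast_le_one K _) hppos.le
      _ = (p:ℝ)⁻¹ := mul_one _
      _ < 1 := hplt
  have := IsUltrametricDist.norm_add_le_max ((u : K) * ((Nat.gcdA u p : ℤ) : K))
      ((p : K) * ((Nat.gcdB u p : ℤ) : K))
  rw [← h1] at this
  exact absurd this (not_le.mpr (max_lt hu1 hp1))

lemma norm_natCast_eq (t : ℕ) (ht : 0 < t) :
    ‖(t : K)‖ = ((p:ℝ))⁻¹ ^ (t.factorization p) := by
  have hfact := Nat.ordProj_mul_ordCompl_eq_self t p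
  have : (t : K) = ((p : K) ^ (t.factorization p)) * ((ordCompl[p] t : ℕ) : K) := by
    exact_mod_cast congrArg (fun z : ℕ => (z : K)) hfact.symm
  rw [this, norm_mul, norm_pow, hpK, norm_coprime hp hpK (Nat.not_dvd_ordCompl hp ht.ne'),
    mul_one]

lemma norm_natCast_ge (t : ℕ) (ht : 0 < t) : ((p:ℝ))⁻¹ ^ (t - 1) ≤ ‖(t : K)‖ := by
  rw [norm_natCast_eq hp hpK t ht]
  have h0 : (0:ℝ) < (p:ℝ)⁻¹ := by rw [inv_pos]; exact_mod_cast hp.pos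
  have h1 : (p:ℝ)⁻¹ ≤ 1 := by
    rw [inv_le_one_iff₀]; right; exact_mod_cast hp.one_le
  refine pow_le_pow_of_le_one h0.le h1 ?_
  -- t.factorization p ≤ t - 1
  have hle : p ^ (t.factorization p) ≤ t := Nat.ordProj_le p ht.ne'
  have hlt : t.factorization p < p ^ (t.factorization p) :=
    Nat.lt_pow_self hp.one_lt
  omega

/-- `‖C(m, t)‖ ≤ ‖m‖ * p^(t-1)` for `t ≥ 1`. -/
lemma norm_choose_le (m t : ℕ) (ht : 0 < t) :
    ‖((m.choose t : ℕ) : K)‖ ≤ ‖(m : K)‖ * (p : ℝ) ^ (t - 1) := by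
  rcases Nat.eq_zero_or_pos m with hm | hm
  · subst hm
    rw [Nat.choose_eq_zero_of_lt ht]
    simp
  -- m * C(m-1, t-1) = C(m, t) * t
  obtain ⟨m', rfl⟩ : ∃ m', m = m' + 1 := ⟨m - 1, by omega⟩
  obtain ⟨t', rfl⟩ : ∃ t', t = t' + 1 := ⟨t - 1, by omega⟩
  have key : (m' + 1) * m'.choose t' = (m' + 1).choose (t' + 1) * (t' + 1) := by
    simpa [Nat.succ_eq_add_one] using Nat.add_one_mul_choose_eq m' t'
  have keyK : ((m' + 1 : ℕ) : K) * ((m'.choose t' : ℕ) : K)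
      = (((m' + 1).choose (t' + 1) : ℕ) : K) * (((t' + 1 : ℕ)) : K) := by
    exact_mod_cast congrArg (fun z : ℕ => (z : K)) key
  have htK : (((t' + 1 : ℕ)) : K) ≠ 0 := by exact_mod_cast (Nat.succ_ne_zero t')
  have hnorm : ‖(((m' + 1).choose (t' + 1) : ℕ) : K)‖ * ‖((t' + 1 : ℕ) : K)‖ ≤ ‖((m' + 1 : ℕ) : K)‖ := by
    rw [← norm_mul, ← keyK, norm_mul]
    calc ‖((m' + 1 : ℕ):K)‖ * ‖((m'.choose t' : ℕ) : K)‖ ≤ ‖((m' + 1 : ℕ):K)‖ * 1 :=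
          mul_le_mul_of_nonneg_left (IsUltrametricDist.norm_natCast_le_one K _) (norm_nonneg _)
      _ = ‖((m' + 1 : ℕ):K)‖ := mul_one _
  have htpos : (0:ℝ) < ‖((t' + 1 : ℕ) : K)‖ := norm_pos_iff.mpr htK
  rw [← le_div_iff₀ htpos] at hnorm
  refine hnorm.trans ?_
  rw [div_le_iff₀ htpos]
  have hppos : (0:ℝ) < (p:ℝ) := by exact_mod_cast hp.pos
  have hlow := norm_natCast_ge hp hpK (t' + 1) (Nat.succ_pos t')
  calc ‖((m' + 1 : ℕ):K)‖
      = ‖((m' + 1 : ℕ):K)‖ * ((p:ℝ)^(t' + 1 - 1) * ((p:ℝ)⁻¹)^(t' + 1 - 1)) := by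
        rw [← mul_pow, mul_inv_cancel₀ hppos.ne', one_pow, mul_one]
    _ = (‖((m' + 1 : ℕ):K)‖ * (p:ℝ)^(t' + 1 - 1)) * ((p:ℝ)⁻¹)^(t' + 1 - 1) := by ring
    _ ≤ (‖((m' + 1 : ℕ):K)‖ * (p:ℝ)^(t' + 1 - 1)) * ‖((t' + 1 : ℕ):K)‖ := by
        refine mul_le_mul_of_nonneg_left hlow ?_
        exact mul_nonneg (norm_nonneg _) (pow_nonneg hppos.le _)

end NatNorm

section Itc

/-- `n`-fold composition iterate of a polynomial. -/
noncomputable def itc (f : K[X]) : ℕ → K[X]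
  | 0 => X
  | (n + 1) => (itc f n).comp f

@[simp] lemma itc_zero (f : K[X]) : itc f 0 = X := rfl

@[simp] lemma itc_succ (f : K[X]) (n : ℕ) : itc f (n + 1) = (itc f n).comp f := rfl

lemma eval_itc (f : K[X]) (n : ℕ) (x : K) :
    (itc f n).eval x = (fun y => f.eval y)^[n] x := by
  induction n generalizing x with
  | zero => simp [itc]
  | succ n ih =>
      rw [itc_succ, eval_comp, ih, Function.iterate_succ_apply]

lemma cb_itc {f : K[X]} (hf : CB 1 f) (n : ℕ) : CB 1 (itc f n) := by
  induction n with
  | zero => exact CB.X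
  | succ n ih => exact ih.comp hf

lemma natDegree_itc (f : K[X]) (n : ℕ) : (itc f n).natDegree = f.natDegree ^ n := by
  induction n with
  | zero => simp [itc]
  | succ n ih => rw [itc_succ, natDegree_comp, ih, pow_succ]

lemma norm_leadingCoeff_itc {f : K[X]} (hl : ‖f.leadingCoeff‖ = 1)
    (hd : f.natDegree ≠ 0) (n : ℕ) : ‖(itc f n).leadingCoeff‖ = 1 := by
  induction n with
  | zero => simp [itc, Polynomial.leadingCoeff_X]
  | succ n ih =>
      rw [itc_succ, Polynomial.leadingCoeff_comp hd, norm_mul, norm_pow, ih, hl, one_pow, mul_one]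

end Itc

/-- integral polynomials with unit leading coefficient have integral roots -/
lemma root_le_one {φ : K[X]} (hcb : CB 1 φ) (hl : ‖φ.leadingCoeff‖ = 1) {ρ : K}
    (hρ : φ.eval ρ = 0) : ‖ρ‖ ≤ 1 := by
  by_contra hgt
  push_neg at hgt
  have hlc : φ.coeff φ.natDegree = φ.leadingCoeff := rfl
  have heval := (Polynomial.eval_eq_sum_range (p := φ) ρ).symm
  rw [hρ, Finset.sum_range_succ] at heval
  -- heval : Σ_{i<D} + coeff D * ρ^D = 0
  rcases Nat.eq_zero_or_pos φ.natDegree with hD0 | hDpos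
  · rw [hD0] at heval hlc
    simp only [Finset.range_zero, Finset.sum_empty, zero_add, pow_zero, mul_one] at heval
    have : ‖φ.coeff 0‖ = 1 := by rw [hlc, hl]
    rw [heval] at this
    simp at this
  have h0 : φ.coeff φ.natDegree * ρ ^ φ.natDegree
      = -(∑ i ∈ Finset.range φ.natDegree, φ.coeff i * ρ ^ i) := by
    rw [add_comm] at heval
    exact (add_eq_zero_iff_eq_neg).mp heval
  have htop : ‖φ.coeff φ.natDegree * ρ ^ φ.natDegree‖ = ‖ρ‖ ^ φ.natDegree := by
    rw [norm_mul, norm_pow, hlc, hl, one_mul]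
  have hrest : ‖∑ i ∈ Finset.range φ.natDegree, φ.coeff i * ρ ^ i‖ ≤ ‖ρ‖ ^ (φ.natDegree - 1) := by
    refine IsUltrametricDist.norm_sum_le_of_forall_le_of_nonneg
      (pow_nonneg (norm_nonneg _) _) (fun i hi => ?_)
    rw [norm_mul, norm_pow]
    calc ‖φ.coeff i‖ * ‖ρ‖ ^ i ≤ 1 * ‖ρ‖ ^ i :=
          mul_le_mul_of_nonneg_right (hcb i) (pow_nonneg (norm_nonneg _) _)
      _ = ‖ρ‖ ^ i := one_mul _
      _ ≤ ‖ρ‖ ^ (φ.natDegree - 1) := by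
          refine pow_le_pow_right₀ (le_of_lt hgt) ?_
          have := Finset.mem_range.mp hi
          omega
  have hlt : ‖ρ‖ ^ (φ.natDegree - 1) < ‖ρ‖ ^ φ.natDegree := by
    refine pow_lt_pow_right₀ hgt ?_
    omega
  have : ‖ρ‖ ^ φ.natDegree ≤ ‖ρ‖ ^ (φ.natDegree - 1) := by
    rw [← htop, h0, norm_neg]
    exact hrest
  exact absurd this (not_le.mpr hlt)

end S8

namespace S8

variable {K : Type*} [NormedField K] [IsUltrametricDist K]

/-- forward difference operator on sequences -/
def dd (ψ : ℕ → K) : ℕ → K := fun n => ψ (n + 1) - ψ n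

/-- Newton's forward-difference formula. -/
lemma newton (ψ : ℕ → K) (n : ℕ) :
    ψ n = ∑ k ∈ Finset.range (n + 1), ((n.choose k : ℕ) : K) * (dd^[k] ψ) 0 := by
  induction n generalizing ψ with
  | zero => simp
  | succ n ih =>
    have e1 : ψ (n + 1) = ψ n + dd ψ n := by simp [dd]
    have hsplit :
        ∑ k ∈ Finset.range (n + 2), (((n+1).choose k : ℕ) : K) * (dd^[k] ψ) 0
          = (∑ k ∈ Finset.range (n + 1), (((n+1).choose (k+1) : ℕ) : K) * (dd^[k+1] ψ) 0)
            + (((n+1).choose 0 : ℕ) : K) * (dd^[0] ψ) 0 :=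
      Finset.sum_range_succ' _ (n + 1)
    have hpascal : ∀ k : ℕ, (((n+1).choose (k+1) : ℕ) : K)
        = ((n.choose k : ℕ) : K) + ((n.choose (k+1) : ℕ) : K) := by
      intro k
      exact_mod_cast congrArg (fun z : ℕ => (z : K)) (Nat.choose_succ_succ n k)
    have hterm : ∀ k ∈ Finset.range (n+1),
        (((n+1).choose (k+1) : ℕ) : K) * (dd^[k+1] ψ) 0
        = ((n.choose k : ℕ) : K) * (dd^[k] (dd ψ)) 0
          + ((n.choose (k+1) : ℕ) : K) * (dd^[k+1] ψ) 0 := by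
      intro k _
      rw [hpascal k, add_mul, Function.iterate_succ_apply]
    have hsum2 :
        ∑ k ∈ Finset.range (n + 1), ((n.choose (k+1) : ℕ) : K) * (dd^[k+1] ψ) 0
          = (∑ k ∈ Finset.range (n + 1), ((n.choose k : ℕ) : K) * (dd^[k] ψ) 0)
            - ((n.choose 0 : ℕ) : K) * (dd^[0] ψ) 0 := by
      have h1 :
          ∑ k ∈ Finset.range (n + 2), ((n.choose k : ℕ) : K) * (dd^[k] ψ) 0
            = (∑ k ∈ Finset.range (n + 1), ((n.choose (k+1) : ℕ) : K) * (dd^[k+1] ψ) 0)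
              + ((n.choose 0 : ℕ) : K) * (dd^[0] ψ) 0 :=
        Finset.sum_range_succ' _ (n + 1)
      have h2 :
          ∑ k ∈ Finset.range (n + 2), ((n.choose k : ℕ) : K) * (dd^[k] ψ) 0
            = (∑ k ∈ Finset.range (n + 1), ((n.choose k : ℕ) : K) * (dd^[k] ψ) 0)
              + ((n.choose (n+1) : ℕ) : K) * (dd^[n+1] ψ) 0 :=
        Finset.sum_range_succ _ (n + 1)
      rw [Nat.choose_succ_self] at h2
      simp only [Nat.cast_zero, zero_mul, add_zero] at h2
      rw [h2] at h1
      -- h1 : S + 0-term? rearrange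
      have := h1.symm
      -- ∑ C(n,k+1) a_{k+1} = ∑ C(n,k) a_k - C(n,0) a_0
      have h3 := congrArg (fun z => z - ((n.choose 0 : ℕ) : K) * (dd^[0] ψ) 0) h1
      simp only [add_sub_cancel_right] at h3
      exact h3.symm
    rw [e1, ih ψ, ih (dd ψ), hsplit, Finset.sum_congr rfl hterm, Finset.sum_add_distrib, hsum2]
    simp only [Nat.choose_zero_right, Nat.cast_one, one_mul, Function.iterate_zero, id_eq]
    ring

/-- the sequence of difference polynomials -/
noncomputable def phiSeq (u : K[X]) : ℕ → K[X]
  | 0 => u - X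
  | (k + 1) => (phiSeq u k).comp u - phiSeq u k

@[simp] lemma phiSeq_zero (u : K[X]) : phiSeq u 0 = u - X := rfl

@[simp] lemma phiSeq_succ (u : K[X]) (k : ℕ) :
    phiSeq u (k + 1) = (phiSeq u k).comp u - phiSeq u k := rfl

/-- the orbit of `0` under a polynomial -/
noncomputable def orb (u : K[X]) (n : ℕ) : K := (fun x => u.eval x)^[n] 0

@[simp] lemma orb_zero (u : K[X]) : orb u 0 = 0 := rfl

lemma orb_succ (u : K[X]) (n : ℕ) : orb u (n + 1) = u.eval (orb u n) := by
  rw [orb, Function.iterate_succ_apply', orb]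

/-- key contraction: composing-and-subtracting gains a factor ε -/
lemma comp_sub_small {u φ : K[X]} {t ε : ℝ} (hu : CB 1 u) (husm : CB ε (u - X))
    (hφ : CB t φ) : CB (t * ε) (φ.comp u - φ) := by
  have hrepr : φ.comp u - φ
      = (∑ e ∈ φ.support, Polynomial.C (φ.coeff e)
          * ∑ i ∈ Finset.range e, u ^ i * X ^ (e - 1 - i)) * (u - X) := by
    have hstep : φ.comp u - φ
        = ∑ e ∈ φ.support,
            (Polynomial.C (φ.coeff e) * u ^ e - Polynomial.C (φ.coeff e) * X ^ e) := by
      rw [Finset.sum_sub_distrib]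
      congr 1
      · rw [comp_eq_sum_left, Polynomial.sum_def]
      · conv_lhs => rw [← Polynomial.sum_C_mul_X_pow_eq φ]
        rw [Polynomial.sum_def]
    rw [hstep, Finset.sum_mul]
    refine Finset.sum_congr rfl (fun e _ => ?_)
    rw [← mul_sub, ← geom_sum₂_mul u X e, mul_assoc]
  rw [hrepr]
  have h1 : CB t (∑ e ∈ φ.support, Polynomial.C (φ.coeff e)
      * ∑ i ∈ Finset.range e, u ^ i * X ^ (e - 1 - i)) := by
    refine CB.sum hφ.nonneg (fun e _ => ?_)
    have h2 : CB 1 (∑ i ∈ Finset.range e, u ^ i * X ^ (e - 1 - i)) := by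
      refine CB.sum zero_le_one (fun i _ => ?_)
      have := (hu.pow i).mul (CB.X.pow (e - 1 - i))
      simpa using this
    have := (CB.C (hφ e) hφ.nonneg).mul h2
    simpa using this
  exact h1.mul husm

section BP

variable [CharZero K] {p : ℕ}

/-- Rigidity: if `u ≡ X` coefficientwise mod `p²` and `0` is periodic, then `0` is fixed. -/
lemma bp (hp : p.Prime) (hpK : ‖(p : K)‖ = (p : ℝ)⁻¹) {u : K[X]}
    (hsm : ∀ j, ‖(u - X).coeff j‖ ≤ ((p:ℝ)⁻¹) ^ 2)
    {m : ℕ} (hm : 0 < m) (hper : orb u m = 0) :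
    u.eval 0 = 0 := by
  have hp1 : (1:ℝ) < (p:ℝ) := by exact_mod_cast hp.one_lt
  have hppos : (0:ℝ) < (p:ℝ) := lt_trans one_pos hp1
  have hpi0 : (0:ℝ) < (p:ℝ)⁻¹ := inv_pos.mpr hppos
  have hpi1 : (p:ℝ)⁻¹ < 1 := by
    rw [inv_lt_one_iff₀]; right; exact hp1
  have hε0 : (0:ℝ) < ((p:ℝ)⁻¹) ^ 2 := pow_pos hpi0 2
  have hε1 : ((p:ℝ)⁻¹) ^ 2 ≤ 1 := le_of_lt (pow_lt_one₀ hpi0.le hpi1 (by norm_num))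
  have husm : CB (((p:ℝ)⁻¹) ^ 2) (u - X) := hsm
  have hu : CB 1 u := by
    have := (husm.mono hε1).add CB.X
    simpa [sub_add_cancel] using this
  have hφsm : ∀ k, CB ((((p:ℝ)⁻¹) ^ 2) ^ (k+1)) (phiSeq u k) := by
    intro k; induction k with
    | zero =>
        simp only [phiSeq_zero, zero_add, pow_one]
        exact husm
    | succ k ih =>
        rw [phiSeq_succ]
        have := comp_sub_small hu husm ih
        rw [← pow_succ] at this
        exact this
  have hdd : ∀ k n, (dd^[k+1] (orb u)) n = (phiSeq u k).eval (orb u n) := by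
    intro k
    induction k with
    | zero =>
        intro n
        show orb u (n+1) - orb u n = _
        rw [orb_succ, phiSeq_zero, Polynomial.eval_sub, Polynomial.eval_X]
    | succ k ih =>
        intro n
        have hit : dd^[k+1+1] (orb u) = dd (dd^[k+1] (orb u)) :=
          Function.iterate_succ_apply' dd (k+1) (orb u)
        rw [hit]
        show (dd^[k+1] (orb u)) (n+1) - (dd^[k+1] (orb u)) n = _
        rw [ih (n+1), ih n, orb_succ, phiSeq_succ, Polynomial.eval_sub, Polynomial.eval_comp]
  have ha0 : (dd^[0] (orb u)) 0 = 0 := by simp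
  have hak : ∀ k : ℕ, ‖(dd^[k+1] (orb u)) 0‖ ≤ (((p:ℝ)⁻¹) ^ 2) ^ (k+1) := by
    intro k
    rw [hdd k 0, orb_zero]
    exact (hφsm k).eval (by simp)
  have hψzero : ∀ t : ℕ, orb u (m * t) = 0 := by
    intro t
    rw [orb, Function.iterate_mul]
    exact Function.iterate_fixed hper t
  -- the coefficient polynomials
  have hWsum : ∀ i k : ℕ, (((X + 1 : K[X]) ^ m - 1) ^ i).coeff k
      = ∑ t ∈ Finset.range (i + 1),
          (((m*t).choose k : ℕ) : K) * ((-1 : K) ^ (i - t) * ((i.choose t : ℕ) : K)) := by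
    intro i k
    have hpolyid : ((X + 1 : K[X]) ^ m - 1) ^ i
        = ∑ t ∈ Finset.range (i + 1),
            (X + 1 : K[X]) ^ (m*t)
              * Polynomial.C ((-1 : K) ^ (i - t) * ((i.choose t : ℕ) : K)) := by
      rw [sub_eq_add_neg, add_pow]
      refine Finset.sum_congr rfl (fun t _ => ?_)
      rw [pow_mul]
      rw [map_mul, map_pow, map_neg, map_one, Polynomial.C_eq_natCast, mul_assoc]
    rw [hpolyid, Polynomial.finset_sum_coeff]
    refine Finset.sum_congr rfl (fun t _ => ?_)
    rw [Polynomial.coeff_mul_C, Polynomial.coeff_X_add_one_pow]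
  -- master equations
  have hkey : ∀ i : ℕ, 0 < i →
      ∑ k ∈ Finset.range (i * m + 1),
        (((X + 1 : K[X]) ^ m - 1) ^ i).coeff k * (dd^[k] (orb u)) 0 = 0 := by
    intro i _
    have h1 : ∀ k ∈ Finset.range (i*m+1),
        (((X + 1 : K[X]) ^ m - 1) ^ i).coeff k * (dd^[k] (orb u)) 0
        = ∑ t ∈ Finset.range (i+1),
            (((m*t).choose k : ℕ) : K) * ((-1:K)^(i-t) * ((i.choose t : ℕ) : K))
              * (dd^[k] (orb u)) 0 := by
      intro k _
      rw [hWsum i k, Finset.sum_mul]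
    rw [Finset.sum_congr rfl h1, Finset.sum_comm]
    have hinner : ∀ t ∈ Finset.range (i+1),
        ∑ k ∈ Finset.range (i * m + 1),
          (((m*t).choose k : ℕ) : K) * ((-1:K)^(i-t) * ((i.choose t : ℕ) : K))
            * (dd^[k] (orb u)) 0 = 0 := by
      intro t ht
      have hfact : ∀ k ∈ Finset.range (i*m+1),
          (((m*t).choose k : ℕ) : K) * ((-1:K)^(i-t) * ((i.choose t : ℕ) : K))
            * (dd^[k] (orb u)) 0
          = ((-1:K)^(i-t) * ((i.choose t : ℕ) : K))
              * ((((m*t).choose k : ℕ) : K) * (dd^[k] (orb u)) 0) := by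
        intro k _; ring
      rw [Finset.sum_congr rfl hfact, ← Finset.mul_sum]
      have hsub : Finset.range (m*t + 1) ⊆ Finset.range (i*m + 1) := by
        refine Finset.range_subset_range.mpr ?_
        have ht' : t ≤ i := Nat.lt_succ_iff.mp (Finset.mem_range.mp ht)
        have : m * t ≤ i * m := by
          calc m*t ≤ m*i := Nat.mul_le_mul_left m ht'
            _ = i*m := Nat.mul_comm m i
        omega
      have hvan : ∀ k ∈ Finset.range (i*m+1), k ∉ Finset.range (m*t+1)
          → (((m*t).choose k : ℕ) : K) * (dd^[k] (orb u)) 0 = 0 := by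
        intro k _ hk
        have hlt : m*t < k := by
          simp only [Finset.mem_range] at hk
          omega
        rw [Nat.choose_eq_zero_of_lt hlt]
        simp
      have hval : ∑ k ∈ Finset.range (i * m + 1),
          (((m*t).choose k : ℕ) : K) * (dd^[k] (orb u)) 0 = 0 := by
        rw [← Finset.sum_subset hsub hvan, ← newton (orb u) (m*t), hψzero t]
      rw [hval, mul_zero]
    rw [Finset.sum_congr rfl hinner, Finset.sum_const_zero]
  -- the divX factor and coefficient bounds
  set V : K[X] := ((X + 1 : K[X]) ^ m - 1).divX with hVdef
  have hcoeff0 : ((X + 1 : K[X]) ^ m - 1).coeff 0 = 0 := by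
    rw [Polynomial.coeff_sub, Polynomial.coeff_X_add_one_pow, Polynomial.coeff_one]
    simp
  have hXV : (X : K[X]) * V = (X + 1 : K[X]) ^ m - 1 := by
    have := Polynomial.X_mul_divX_add ((X + 1 : K[X]) ^ m - 1)
    rw [hcoeff0] at this
    simpa using this
  have hWlow : ∀ i k : ℕ, k < i → (((X + 1 : K[X]) ^ m - 1) ^ i).coeff k = 0 := by
    intro i k hk
    rw [← hXV, mul_pow, Polynomial.coeff_X_pow_mul']
    rw [if_neg (by omega)]
  have hV0 : V.coeff 0 = ((m : ℕ) : K) := by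
    rw [hVdef, Polynomial.coeff_divX, Polynomial.coeff_sub, Polynomial.coeff_X_add_one_pow,
      Polynomial.coeff_one]
    simp [Nat.choose_one_right]
  have hWdiag : ∀ i : ℕ, (((X + 1 : K[X]) ^ m - 1) ^ i).coeff i = ((m : ℕ) : K) ^ i := by
    intro i
    rw [← hXV, mul_pow, Polynomial.coeff_X_pow_mul', if_pos (le_refl i), Nat.sub_self]
    have h0 : (V ^ i).coeff 0 = (V.coeff 0) ^ i := by
      rw [← Polynomial.constantCoeff_apply, ← Polynomial.constantCoeff_apply, map_pow]
    rw [h0, hV0]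
  have hVbound : ∀ j : ℕ, ‖V.coeff j‖ ≤ ‖((m : ℕ) : K)‖ * (p:ℝ) ^ j := by
    intro j
    have hVc : V.coeff j = ((m.choose (j+1) : ℕ) : K) := by
      rw [hVdef, Polynomial.coeff_divX, Polynomial.coeff_sub, Polynomial.coeff_X_add_one_pow,
        Polynomial.coeff_one]
      simp
    rw [hVc]
    have := norm_choose_le hp hpK m (j+1) (Nat.succ_pos j)
    simpa using this
  have hVpow : ∀ i j : ℕ, ‖(V ^ i).coeff j‖ ≤ ‖((m : ℕ) : K)‖ ^ i * (p:ℝ) ^ j := by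
    intro i
    induction i with
    | zero =>
        intro j
        rcases Nat.eq_zero_or_pos j with hj | hj
        · subst hj; simp
        · rw [pow_zero, Polynomial.coeff_one, if_neg (by omega)]
          simp only [norm_zero]
          positivity
    | succ i ih =>
        intro j
        rw [pow_succ, Polynomial.coeff_mul]
        refine IsUltrametricDist.norm_sum_le_of_forall_le_of_nonneg (by positivity) ?_
        rintro ⟨b, c⟩ hbc
        have hsum : b + c = j := Finset.HasAntidiagonal.mem_antidiagonal.mp hbc
        rw [norm_mul]
        calc ‖(V^i).coeff b‖ * ‖V.coeff c‖
            ≤ (‖((m : ℕ) : K)‖ ^ i * (p:ℝ) ^ b) * (‖((m : ℕ) : K)‖ * (p:ℝ) ^ c) :=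
              mul_le_mul (ih b) (hVbound c) (norm_nonneg _) (by positivity)
          _ = ‖((m : ℕ) : K)‖ ^ (i+1) * (p:ℝ) ^ (b + c) := by ring
          _ = ‖((m : ℕ) : K)‖ ^ (i+1) * (p:ℝ) ^ j := by rw [hsum]
  have hWbound : ∀ i k : ℕ, i ≤ k →
      ‖(((X + 1 : K[X]) ^ m - 1) ^ i).coeff k‖ ≤ ‖((m : ℕ) : K)‖ ^ i * (p:ℝ) ^ (k - i) := by
    intro i k hik
    rw [← hXV, mul_pow, Polynomial.coeff_X_pow_mul', if_pos hik]
    exact hVpow i (k - i)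
  -- the improvement loop
  have hmK : ((m : ℕ) : K) ≠ 0 := Nat.cast_ne_zero.mpr hm.ne'
  have hmKpos : (0:ℝ) < ‖((m : ℕ) : K)‖ := norm_pos_iff.mpr hmK
  have hloop : ∀ r : ℕ, ∀ k : ℕ, 0 < k →
      ‖(dd^[k] (orb u)) 0‖ ≤ (((p:ℝ)⁻¹) ^ 2) ^ k * ((p:ℝ)⁻¹) ^ r := by
    intro r
    induction r with
    | zero =>
        intro k hk
        obtain ⟨k', rfl⟩ : ∃ k', k = k' + 1 := ⟨k - 1, by omega⟩
        simpa using hak k'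
    | succ r ih =>
        intro i hi
        have heq := hkey i hi
        have hile : i + 1 ≤ i * m + 1 := by
          have : i ≤ i * m := Nat.le_mul_of_pos_right i hm
          omega
        have hsplit := Finset.sum_range_add_sum_Ico
          (fun k => (((X + 1 : K[X]) ^ m - 1) ^ i).coeff k * (dd^[k] (orb u)) 0) hile
        have hr1 : ∑ k ∈ Finset.range (i + 1),
            (((X + 1 : K[X]) ^ m - 1) ^ i).coeff k * (dd^[k] (orb u)) 0
            = ((m : ℕ) : K) ^ i * (dd^[i] (orb u)) 0 := by
          rw [Finset.sum_range_succ]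
          have hz : ∑ k ∈ Finset.range i,
              (((X + 1 : K[X]) ^ m - 1) ^ i).coeff k * (dd^[k] (orb u)) 0 = 0 :=
            Finset.sum_eq_zero (fun k hk => by
              rw [hWlow i k (Finset.mem_range.mp hk), zero_mul])
          rw [hz, zero_add, hWdiag i]
        rw [hr1] at hsplit
        have heq2 : ((m : ℕ) : K) ^ i * (dd^[i] (orb u)) 0
            = -(∑ k ∈ Finset.Ico (i+1) (i*m+1),
                (((X + 1 : K[X]) ^ m - 1) ^ i).coeff k * (dd^[k] (orb u)) 0) :=
          eq_neg_of_add_eq_zero_left (hsplit.trans heq)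
        have hbound : ‖((m : ℕ) : K) ^ i * (dd^[i] (orb u)) 0‖
            ≤ ‖((m : ℕ) : K)‖ ^ i * ((((p:ℝ)⁻¹) ^ 2) ^ i * ((p:ℝ)⁻¹) ^ (r+1)) := by
          rw [heq2, norm_neg]
          refine IsUltrametricDist.norm_sum_le_of_forall_le_of_nonneg (by positivity) ?_
          intro k hk
          obtain ⟨hk1, hk2⟩ := Finset.mem_Ico.mp hk
          have hik : i ≤ k := by omega
          have h1 : ‖(((X + 1 : K[X]) ^ m - 1) ^ i).coeff k * (dd^[k] (orb u)) 0‖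
              ≤ (‖((m : ℕ) : K)‖ ^ i * (p:ℝ) ^ (k - i))
                * ((((p:ℝ)⁻¹) ^ 2) ^ k * ((p:ℝ)⁻¹) ^ r) := by
            rw [norm_mul]
            exact mul_le_mul (hWbound i k hik) (ih k (by omega)) (norm_nonneg _) (by positivity)
          refine h1.trans ?_
          have h2k : (((p:ℝ)⁻¹) ^ 2) ^ k = ((p:ℝ)⁻¹) ^ (k - i) * ((p:ℝ)⁻¹) ^ (k + i) := by
            rw [← pow_mul, ← pow_add]
            congr 1
            omega
          have hcancel : (p:ℝ) ^ (k - i) * ((p:ℝ)⁻¹) ^ (k - i) = 1 := by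
            rw [← mul_pow, mul_inv_cancel₀ (ne_of_gt hppos), one_pow]
          have harith : (p:ℝ) ^ (k - i) * ((((p:ℝ)⁻¹) ^ 2) ^ k * ((p:ℝ)⁻¹) ^ r)
              ≤ (((p:ℝ)⁻¹) ^ 2) ^ i * ((p:ℝ)⁻¹) ^ (r+1) := by
            rw [h2k]
            calc (p:ℝ) ^ (k-i) * (((p:ℝ)⁻¹) ^ (k-i) * ((p:ℝ)⁻¹) ^ (k+i) * ((p:ℝ)⁻¹) ^ r)
                = ((p:ℝ) ^ (k-i) * ((p:ℝ)⁻¹) ^ (k-i))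
                    * (((p:ℝ)⁻¹) ^ (k+i) * ((p:ℝ)⁻¹) ^ r) := by ring
              _ = ((p:ℝ)⁻¹) ^ (k+i) * ((p:ℝ)⁻¹) ^ r := by rw [hcancel, one_mul]
              _ = ((p:ℝ)⁻¹) ^ (k+i+r) := by rw [← pow_add]
              _ ≤ ((p:ℝ)⁻¹) ^ (2*i+1+r) := by
                  refine pow_le_pow_of_le_one hpi0.le hpi1.le ?_
                  omega
              _ = (((p:ℝ)⁻¹) ^ 2) ^ i * ((p:ℝ)⁻¹) ^ (r+1) := by
                  rw [← pow_mul, ← pow_add]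
                  congr 1
                  omega
          calc (‖((m : ℕ) : K)‖ ^ i * (p:ℝ) ^ (k - i))
                * ((((p:ℝ)⁻¹) ^ 2) ^ k * ((p:ℝ)⁻¹) ^ r)
              = ‖((m : ℕ) : K)‖ ^ i
                  * ((p:ℝ) ^ (k - i) * ((((p:ℝ)⁻¹) ^ 2) ^ k * ((p:ℝ)⁻¹) ^ r)) := by ring
            _ ≤ ‖((m : ℕ) : K)‖ ^ i * ((((p:ℝ)⁻¹) ^ 2) ^ i * ((p:ℝ)⁻¹) ^ (r+1)) :=
                mul_le_mul_of_nonneg_left harith (by positivity)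
        rw [norm_mul, norm_pow] at hbound
        exact (mul_le_mul_iff_right₀ (pow_pos hmKpos i)).mp hbound
  -- conclusion
  have ha1 : (dd^[1] (orb u)) 0 = 0 := by
    by_contra hne
    have hpos : 0 < ‖(dd^[1] (orb u)) 0‖ := norm_pos_iff.mpr hne
    obtain ⟨r, hr⟩ := exists_pow_lt_of_lt_one
      (div_pos hpos hε0) hpi1
    have hle := hloop r 1 one_pos
    rw [pow_one] at hle
    have h2 : ((p:ℝ)⁻¹) ^ r * (((p:ℝ)⁻¹) ^ 2)
        < (‖(dd^[1] (orb u)) 0‖ / (((p:ℝ)⁻¹) ^ 2)) * (((p:ℝ)⁻¹) ^ 2) :=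
      mul_lt_mul_of_pos_right hr hε0
    rw [div_mul_cancel₀ _ (ne_of_gt hε0)] at h2
    rw [mul_comm] at h2
    exact absurd hle (not_le.mpr h2)
  have h1 : orb u 1 - orb u 0 = 0 := ha1
  rw [orb_succ, orb_zero, sub_zero] at h1
  exact h1

end BP

end S8

namespace S8

variable {K : Type*} [NormedField K] [IsUltrametricDist K]

lemma norm_sub_le_max' (a b : K) : ‖a - b‖ ≤ max ‖a‖ ‖b‖ := by
  rw [sub_eq_add_neg]
  refine le_trans (IsUltrametricDist.norm_add_le_max _ _) ?_
  rw [norm_neg]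

/-- product over a multiset of distances, counting those inside the ball -/
lemma multiset_prod_le {x q : K} {s : ℝ} (hs0 : 0 ≤ s) :
    ∀ S : Multiset K, (∀ ρ ∈ S, ‖x - ρ‖ ≤ 1) →
      (∀ ρ ∈ S, ‖ρ - q‖ ≤ s → ‖x - ρ‖ ≤ s) →
      (S.map fun ρ => ‖x - ρ‖).prod
        ≤ s ^ (Multiset.card (S.filter (fun ρ => ‖ρ - q‖ ≤ s))) := by
  classical
  intro S
  induction S using Multiset.induction_on with
  | empty => intro _ _; simp
  | cons a S ih =>
      intro hx hb
      have hprodnn : (0:ℝ) ≤ (S.map fun ρ => ‖x - ρ‖).prod := by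
        refine Multiset.prod_nonneg ?_
        intro y hy
        obtain ⟨ρ, _, rfl⟩ := Multiset.mem_map.mp hy
        exact norm_nonneg _
      have ih' := ih (fun ρ hρ => hx ρ (Multiset.mem_cons_of_mem hρ))
        (fun ρ hρ h => hb ρ (Multiset.mem_cons_of_mem hρ) h)
      rw [Multiset.map_cons, Multiset.prod_cons]
      by_cases hPa : ‖a - q‖ ≤ s
      · rw [Multiset.filter_cons_of_pos (p := fun ρ => ‖ρ - q‖ ≤ s) S hPa, Multiset.card_cons, pow_succ]
        have h1 : ‖x - a‖ ≤ s := hb a (Multiset.mem_cons_self a S) hPa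
        calc ‖x - a‖ * (S.map fun ρ => ‖x - ρ‖).prod
            ≤ s * s ^ (Multiset.card (S.filter (fun ρ => ‖ρ - q‖ ≤ s))) :=
              mul_le_mul h1 ih' hprodnn hs0
          _ = s ^ (Multiset.card (S.filter (fun ρ => ‖ρ - q‖ ≤ s))) * s := mul_comm _ _
      · rw [Multiset.filter_cons_of_neg (p := fun ρ => ‖ρ - q‖ ≤ s) S hPa]
        have h1 : ‖x - a‖ ≤ 1 := hx a (Multiset.mem_cons_self a S)
        calc ‖x - a‖ * (S.map fun ρ => ‖x - ρ‖).prod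
            ≤ 1 * (s ^ (Multiset.card (S.filter (fun ρ => ‖ρ - q‖ ≤ s)))) :=
              mul_le_mul h1 ih' hprodnn zero_le_one
          _ = s ^ (Multiset.card (S.filter (fun ρ => ‖ρ - q‖ ≤ s))) := one_mul _

section CaseB

variable [CharZero K] {p : ℕ}

/-- Case B: if some iterate displaces the whole ball by at most `δ₀`, then every
periodic point of it in the ball is a fixed point. -/
lemma fixed_of_small (hp : p.Prime) (hpK : ‖(p : K)‖ = (p : ℝ)⁻¹)
    {h : K[X]} (hcb : CB 1 h) {q : K} (hq : ‖q‖ ≤ 1) {s : ℝ} (hs0 : 0 < s) (hs1 : s < 1)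
    (hdisp : ∀ x : K, ‖x - q‖ ≤ s →
      ‖h.eval x - x‖ ≤ (p:ℝ)⁻¹ ^ 3 * min ((p:ℝ)⁻¹ ^ 2) s)
    {η : K} (hη : ‖η - q‖ ≤ s) {mη : ℕ} (hmη : 0 < mη)
    (hfix : (fun x => h.eval x)^[mη] η = η) :
    h.eval η = η := by
  classical
  have hp1 : (1:ℝ) < (p:ℝ) := by exact_mod_cast hp.one_lt
  have hppos : (0:ℝ) < (p:ℝ) := lt_trans one_pos hp1
  have hpi0 : (0:ℝ) < (p:ℝ)⁻¹ := inv_pos.mpr hppos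
  have hpi1 : (p:ℝ)⁻¹ < 1 := by rw [inv_lt_one_iff₀]; right; exact hp1
  set σ : ℝ := min ((p:ℝ)⁻¹ ^ 2) s with hσdef
  have hσ0 : 0 < σ := lt_min (pow_pos hpi0 2) hs0
  have hσs : σ ≤ s := min_le_right _ _
  have hσp : σ ≤ (p:ℝ)⁻¹ ^ 2 := min_le_left _ _
  set δ : ℝ := (p:ℝ)⁻¹ ^ 3 * σ with hδdef
  have hδ0 : 0 < δ := mul_pos (pow_pos hpi0 3) hσ0
  -- choose the scale s' = pinv ^ M₀
  have hex : ∃ M : ℕ, (p:ℝ)⁻¹ ^ M ≤ σ := by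
    obtain ⟨n, hn⟩ := exists_pow_lt_of_lt_one hσ0 hpi1
    exact ⟨n, le_of_lt hn⟩
  set M₀ := Nat.find hex with hM₀def
  have hs'σ : (p:ℝ)⁻¹ ^ M₀ ≤ σ := Nat.find_spec hex
  have hs'0 : (0:ℝ) < (p:ℝ)⁻¹ ^ M₀ := pow_pos hpi0 M₀
  have hM₀pos : 0 < M₀ := by
    rcases Nat.eq_zero_or_pos M₀ with h0 | h
    · exfalso
      rw [h0, pow_zero] at hs'σ
      have : σ < 1 := lt_of_le_of_lt hσp (lt_of_le_of_lt (le_of_eq rfl)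
        (by
          have : (p:ℝ)⁻¹ ^ 2 < 1 := pow_lt_one₀ hpi0.le hpi1 (by norm_num)
          exact this))
      linarith
    · exact h
  have hmin : σ * (p:ℝ)⁻¹ < (p:ℝ)⁻¹ ^ M₀ := by
    have hlt := Nat.find_min hex (m := M₀ - 1) (by omega)
    push_neg at hlt
    have hpow : (p:ℝ)⁻¹ ^ M₀ = (p:ℝ)⁻¹ ^ (M₀ - 1) * (p:ℝ)⁻¹ := by
      rw [← pow_succ]
      congr 1
      omega
    rw [hpow]
    exact mul_lt_mul_of_pos_right hlt hpi0
  -- basic data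
  have hηint : ‖η‖ ≤ 1 := by
    have : η = (η - q) + q := by ring
    rw [this]
    exact le_trans (IsUltrametricDist.norm_add_le_max _ _)
      (max_le (le_trans hη (le_of_lt hs1)) hq)
  set w : K[X] := h - X with hwdef
  have hcbw : CB 1 w := hcb.sub CB.X
  set Wt : K[X] := w.comp (X + Polynomial.C η) with hWtdef
  have hcbWt : CB 1 Wt := hcbw.comp (CB.X.add (CB.C hηint zero_le_one))
  have hWt_eval : ∀ z : K, Wt.eval z = h.eval (z + η) - (z + η) := by
    intro z
    rw [hWtdef, Polynomial.eval_comp, Polynomial.eval_add, Polynomial.eval_X,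
      Polynomial.eval_C, hwdef, Polynomial.eval_sub, Polynomial.eval_X]
  have hWt0 : ‖Wt.coeff 0‖ ≤ δ := by
    rw [Polynomial.coeff_zero_eq_eval_zero, hWt_eval 0, zero_add]
    exact hdisp η hη
  -- the crucial degree-1 coefficient bound
  have hWt1 : ‖Wt.coeff 1‖ ≤ (p:ℝ)⁻¹ ^ 2 := by
    by_cases hD : 1 ≤ Wt.natDegree
    · set z' : K := (p : K) ^ M₀ with hz'def
      have hz'norm : ‖z'‖ = (p:ℝ)⁻¹ ^ M₀ := by
        rw [hz'def, norm_pow, hpK]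
      have hz'ball : ‖z' + η - q‖ ≤ s := by
        have : z' + η - q = z' + (η - q) := by ring
        rw [this]
        refine le_trans (IsUltrametricDist.norm_add_le_max _ _) (max_le ?_ hη)
        rw [hz'norm]
        exact le_trans hs'σ hσs
      have hE : ‖Wt.eval z'‖ ≤ δ := by
        rw [hWt_eval z']
        exact hdisp (z' + η) hz'ball
      have hsum := Polynomial.eval_eq_sum_range (p := Wt) z'
      have hsplit := Finset.sum_range_add_sum_Ico
        (fun j => Wt.coeff j * z' ^ j) (show 2 ≤ Wt.natDegree + 1 by omega)
      have hr2 : ∑ j ∈ Finset.range 2, Wt.coeff j * z' ^ j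
          = Wt.coeff 0 + Wt.coeff 1 * z' := by
        rw [Finset.sum_range_succ, Finset.sum_range_one]
        simp
      rw [hr2] at hsplit
      rw [← hsplit] at hsum
      -- hsum : Wt.eval z' = Wt.coeff 0 + Wt.coeff 1 * z' + S2
      have hkey : Wt.coeff 1 * z'
          = Wt.eval z' - Wt.coeff 0
            - ∑ j ∈ Finset.Ico 2 (Wt.natDegree + 1), Wt.coeff j * z' ^ j := by
        rw [hsum]; ring
      have hS2 : ‖∑ j ∈ Finset.Ico 2 (Wt.natDegree + 1), Wt.coeff j * z' ^ j‖
          ≤ ((p:ℝ)⁻¹ ^ M₀) ^ 2 := by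
        refine IsUltrametricDist.norm_sum_le_of_forall_le_of_nonneg (by positivity) ?_
        intro j hj
        obtain ⟨hj2, _⟩ := Finset.mem_Ico.mp hj
        rw [norm_mul, norm_pow, hz'norm]
        calc ‖Wt.coeff j‖ * ((p:ℝ)⁻¹ ^ M₀) ^ j ≤ 1 * ((p:ℝ)⁻¹ ^ M₀) ^ j :=
              mul_le_mul_of_nonneg_right (hcbWt j) (by positivity)
          _ = ((p:ℝ)⁻¹ ^ M₀) ^ j := one_mul _
          _ ≤ ((p:ℝ)⁻¹ ^ M₀) ^ 2 := by
              refine pow_le_pow_of_le_one (by positivity) ?_ hj2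
              calc (p:ℝ)⁻¹ ^ M₀ ≤ σ := hs'σ
                _ ≤ (p:ℝ)⁻¹ ^ 2 := hσp
                _ ≤ 1 := le_of_lt (pow_lt_one₀ hpi0.le hpi1 (by norm_num))
      have hEmc : ‖Wt.eval z' - Wt.coeff 0‖ ≤ δ := by
        refine le_trans (norm_sub_le_max' _ _) (max_le hE hWt0)
      have hfinal : ‖Wt.coeff 1 * z'‖ ≤ max δ (((p:ℝ)⁻¹ ^ M₀) ^ 2) := by
        rw [hkey]
        exact le_trans (norm_sub_le_max' _ _)
          (max_le (le_trans hEmc (le_max_left _ _)) (le_trans hS2 (le_max_right _ _)))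
      rw [norm_mul, hz'norm] at hfinal
      have hmaxle : max δ (((p:ℝ)⁻¹ ^ M₀) ^ 2) ≤ (p:ℝ)⁻¹ ^ 2 * (p:ℝ)⁻¹ ^ M₀ := by
        refine max_le ?_ ?_
        · rw [hδdef]
          calc (p:ℝ)⁻¹ ^ 3 * σ = (p:ℝ)⁻¹ ^ 2 * (σ * (p:ℝ)⁻¹) := by ring
            _ ≤ (p:ℝ)⁻¹ ^ 2 * (p:ℝ)⁻¹ ^ M₀ :=
                mul_le_mul_of_nonneg_left (le_of_lt hmin) (by positivity)
        · calc ((p:ℝ)⁻¹ ^ M₀) ^ 2 = (p:ℝ)⁻¹ ^ M₀ * (p:ℝ)⁻¹ ^ M₀ := sq _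
            _ ≤ (p:ℝ)⁻¹ ^ 2 * (p:ℝ)⁻¹ ^ M₀ :=
                mul_le_mul_of_nonneg_right (le_trans hs'σ hσp) (by positivity)
      exact le_of_mul_le_mul_right (le_trans hfinal hmaxle) hs'0
    · push_neg at hD
      rw [Polynomial.coeff_eq_zero_of_natDegree_lt hD]
      simp only [norm_zero]
      positivity
  -- build the rescaled polynomial u
  set π : K := (p : K) ^ 2 with hπdef
  have hπnorm : ‖π‖ = (p:ℝ)⁻¹ ^ 2 := by rw [hπdef, norm_pow, hpK]
  have hπne : π ≠ 0 := by
    rw [hπdef]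
    refine pow_ne_zero _ ?_
    have : (p : K) ≠ 0 := by
      exact_mod_cast hp.ne_zero
    exact this
  have hπinvnorm : ‖π⁻¹‖ = ((p:ℝ)) ^ 2 := by
    rw [norm_inv, hπnorm, inv_pow, inv_inv]
  set u : K[X] := X + Polynomial.C π⁻¹ * (Wt.comp (Polynomial.C π * X)) with hudef
  have husub : u - X = Polynomial.C π⁻¹ * (Wt.comp (Polynomial.C π * X)) := by
    rw [hudef, add_sub_cancel_left]
  have hucoeff : ∀ j, (u - X).coeff j = π⁻¹ * (Wt.coeff j * π ^ j) := by
    intro j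
    rw [husub, Polynomial.coeff_C_mul, coeff_comp_C_mul_X]
  have husm : ∀ j, ‖(u - X).coeff j‖ ≤ ((p:ℝ)⁻¹) ^ 2 := by
    intro j
    rw [hucoeff j, norm_mul, norm_mul, norm_pow, hπinvnorm, hπnorm]
    match j with
    | 0 =>
        rw [pow_zero, mul_one]
        calc (p:ℝ) ^ 2 * ‖Wt.coeff 0‖ ≤ (p:ℝ) ^ 2 * δ := by
              exact mul_le_mul_of_nonneg_left hWt0 (by positivity)
          _ = (p:ℝ) ^ 2 * ((p:ℝ)⁻¹ ^ 2 * ((p:ℝ)⁻¹ * σ)) := by rw [hδdef]; ring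
          _ = (p:ℝ)⁻¹ * σ := by
              rw [← mul_assoc, ← mul_pow, mul_inv_cancel₀ (ne_of_gt hppos), one_pow, one_mul]
          _ ≤ (p:ℝ)⁻¹ * ((p:ℝ)⁻¹ ^ 2) := mul_le_mul_of_nonneg_left hσp hpi0.le
          _ ≤ 1 * ((p:ℝ)⁻¹ ^ 2) := by
              exact mul_le_mul_of_nonneg_right hpi1.le (by positivity)
          _ = (p:ℝ)⁻¹ ^ 2 := one_mul _
    | 1 =>
        rw [pow_one]
        calc (p:ℝ) ^ 2 * (‖Wt.coeff 1‖ * (p:ℝ)⁻¹ ^ 2)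
            = ‖Wt.coeff 1‖ * ((p:ℝ) ^ 2 * (p:ℝ)⁻¹ ^ 2) := by ring
          _ = ‖Wt.coeff 1‖ := by
              rw [← mul_pow, mul_inv_cancel₀ (ne_of_gt hppos), one_pow, mul_one]
          _ ≤ (p:ℝ)⁻¹ ^ 2 := hWt1
    | (Nat.succ (Nat.succ j)) =>
        calc (p:ℝ) ^ 2 * (‖Wt.coeff (j+2)‖ * ((p:ℝ)⁻¹ ^ 2) ^ (j + 2))
            ≤ (p:ℝ) ^ 2 * (1 * ((p:ℝ)⁻¹ ^ 2) ^ (j + 2)) := by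
              refine mul_le_mul_of_nonneg_left ?_ (by positivity)
              exact mul_le_mul_of_nonneg_right (hcbWt (j+2)) (by positivity)
          _ = ((p:ℝ) ^ 2 * (p:ℝ)⁻¹ ^ 2) * ((p:ℝ)⁻¹ ^ 2) ^ (j + 1) := by
              rw [one_mul, pow_succ ((p:ℝ)⁻¹ ^ 2) (j+1)]
              ring
          _ = ((p:ℝ)⁻¹ ^ 2) ^ (j + 1) := by
              rw [← mul_pow, mul_inv_cancel₀ (ne_of_gt hppos), one_pow, one_mul]
          _ ≤ ((p:ℝ)⁻¹ ^ 2) ^ 1 := by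
              refine pow_le_pow_of_le_one (by positivity) ?_ (by omega)
              exact le_of_lt (pow_lt_one₀ hpi0.le hpi1 (by norm_num))
          _ = (p:ℝ)⁻¹ ^ 2 := pow_one _
  -- orbit correspondence
  have huev : ∀ x : K, u.eval x = x + π⁻¹ * (h.eval (π * x + η) - (π * x + η)) := by
    intro x
    rw [hudef, Polynomial.eval_add, Polynomial.eval_X, Polynomial.eval_mul, Polynomial.eval_C,
      Polynomial.eval_comp, Polynomial.eval_mul, Polynomial.eval_C, Polynomial.eval_X,
      hWt_eval]
  have horbc : ∀ n : ℕ, orb u n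
      = π⁻¹ * ((fun x => h.eval x)^[n] η - η) := by
    intro n
    induction n with
    | zero => simp
    | succ n ih =>
        rw [orb_succ, ih, huev]
        have hπcan : π * (π⁻¹ * ((fun x => h.eval x)^[n] η - η))
            = (fun x => h.eval x)^[n] η - η := by
          rw [← mul_assoc, mul_inv_cancel₀ hπne, one_mul]
        rw [hπcan]
        have : (fun x => h.eval x)^[n] η - η + η = (fun x => h.eval x)^[n] η := by ring
        rw [this, Function.iterate_succ_apply']
        ring
  have hper : orb u mη = 0 := by
    rw [horbc mη, hfix, sub_self, mul_zero]
  -- apply the rigidity lemma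
  have hbp := bp hp hpK husm hmη hper
  rw [huev 0] at hbp
  have : π * 0 + η = η := by ring
  rw [this] at hbp
  have h2 : π⁻¹ * (h.eval η - η) = 0 := by
    have := hbp
    -- 0 + π⁻¹ * (...) = 0
    rw [zero_add] at this
    exact this
  rcases mul_eq_zero.mp h2 with h3 | h3
  · exact absurd h3 (inv_ne_zero hπne)
  · have := sub_eq_zero.mp h3
    exact this

end CaseB

end S8

namespace S8

lemma norm_multiset_prod' {K : Type*} [NormedField K] (S : Multiset K) :
    ‖S.prod‖ = ((S.map fun a => ‖a‖).prod) := by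
  induction S using Multiset.induction_on with
  | empty => simp
  | cons a S ih => rw [Multiset.prod_cons, Multiset.map_cons, Multiset.prod_cons, norm_mul, ih]

end S8

/-- for a good-reduction polynomial `f` of degree `d ≥ 2`, `q` integral and
`0 < s < 1`, only finitely many periodic points `ξ` of `f` satisfy `‖ξ - q‖ ≤ s`. -/
theorem stmt8 {K : Type*} [NormedField K] [IsUltrametricDist K] [CompleteSpace K]
    [IsAlgClosed K] [CharZero K]
    (p : ℕ) (hp : p.Prime) (hpK : ‖(p : K)‖ = (p : ℝ)⁻¹)
    (f : K[X]) (d : ℕ) (hd : 2 ≤ d) (hdeg : f.natDegree = d)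
    (hcoeff : ∀ i, ‖f.coeff i‖ ≤ 1) (hlead : ‖f.leadingCoeff‖ = 1)
    (q : K) (hq : ‖q‖ ≤ 1) (s : ℝ) (hs0 : 0 < s) (hs1 : s < 1) :
    {ξ : K | ξ ∈ Function.periodicPts (fun x => f.eval x) ∧ ‖ξ - q‖ ≤ s}.Finite := by
  classical
  have hp1 : (1:ℝ) < (p:ℝ) := by exact_mod_cast hp.one_lt
  have hppos : (0:ℝ) < (p:ℝ) := lt_trans one_pos hp1
  have hpi0 : (0:ℝ) < (p:ℝ)⁻¹ := inv_pos.mpr hppos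
  have hδ0 : (0:ℝ) < (p:ℝ)⁻¹ ^ 3 * min ((p:ℝ)⁻¹ ^ 2) s :=
    mul_pos (pow_pos hpi0 3) (lt_min (pow_pos hpi0 2) hs0)
  have hcbf : S8.CB 1 f := hcoeff
  have hdne : f.natDegree ≠ 0 := by rw [hdeg]; omega
  by_cases hcase : ∃ N : ℕ, 0 < N ∧ ∀ x : K, ‖x - q‖ ≤ s →
      ‖(fun y => f.eval y)^[N] x - x‖ ≤ (p:ℝ)⁻¹ ^ 3 * min ((p:ℝ)⁻¹ ^ 2) s
  · -- CASE B : some iterate moves the whole ball very little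
    obtain ⟨N, hN, hsmall⟩ := hcase
    have hcbh : S8.CB 1 (S8.itc f N) := S8.cb_itc hcbf N
    have hhev : ∀ x : K, (S8.itc f N).eval x = (fun y => f.eval y)^[N] x :=
      fun x => S8.eval_itc f N x
    have hdisp : ∀ x : K, ‖x - q‖ ≤ s →
        ‖(S8.itc f N).eval x - x‖ ≤ (p:ℝ)⁻¹ ^ 3 * min ((p:ℝ)⁻¹ ^ 2) s := by
      intro x hx
      rw [hhev]
      exact hsmall x hx
    have hsub : {ξ : K | ξ ∈ Function.periodicPts (fun x => f.eval x) ∧ ‖ξ - q‖ ≤ s}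
        ⊆ {x : K | (S8.itc f N - X).IsRoot x} := by
      rintro ξ ⟨hper, hball⟩
      obtain ⟨n, hn0, hnper⟩ := Function.mem_periodicPts.mp hper
      have hfix : (fun x => (S8.itc f N).eval x)^[n] ξ = ξ := by
        have hfun : (fun x => (S8.itc f N).eval x) = (fun y => f.eval y)^[N] := funext hhev
        rw [hfun, ← Function.iterate_mul, mul_comm, Function.iterate_mul]
        exact Function.iterate_fixed hnper N
      have hfixed := S8.fixed_of_small hp hpK hcbh hq hs0 hs1 hdisp hball hn0 hfix
      show Polynomial.eval ξ (S8.itc f N - X) = 0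
      rw [Polynomial.eval_sub, Polynomial.eval_X, hfixed, sub_self]
    refine Set.Finite.subset (Polynomial.finite_setOf_isRoot ?_) hsub
    -- itc f N - X ≠ 0
    intro h0
    have hX : S8.itc f N = X := by
      have := sub_eq_zero.mp h0
      exact this
    have hdegitc : (S8.itc f N).natDegree = d ^ N := by
      rw [S8.natDegree_itc, hdeg]
    rw [hX, Polynomial.natDegree_X] at hdegitc
    have : 2 ≤ d ^ N := le_trans hd (Nat.le_self_pow hN.ne' d)
    omega
  · -- CASE A : every iterate moves some point of the ball substantially
    push_neg at hcase
    -- pick C with s ^ (C + 1) < δ₀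
    obtain ⟨C, hC⟩ := exists_pow_lt_of_lt_one hδ0 hs1
    have hC1 : s ^ (C + 1) < (p:ℝ)⁻¹ ^ 3 * min ((p:ℝ)⁻¹ ^ 2) s :=
      lt_of_le_of_lt (pow_le_pow_of_le_one hs0.le hs1.le (Nat.le_succ C)) hC
    -- suppose the set is infinite
    by_contra hinf
    have hinf' : {ξ : K | ξ ∈ Function.periodicPts (fun x => f.eval x) ∧ ‖ξ - q‖ ≤ s}.Infinite :=
      hinf
    obtain ⟨T, hTsub, hTcard⟩ := hinf'.exists_subset_card_eq (C + 1)
    -- common period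
    set m : ℕ := ∏ η ∈ T, Function.minimalPeriod (fun x => f.eval x) η with hm
    have hm0 : 0 < m := by
      refine Finset.prod_pos (fun η hη => ?_)
      exact Function.minimalPeriod_pos_of_mem_periodicPts (hTsub hη).1
    have hfixT : ∀ η ∈ T, (fun x => f.eval x)^[m] η = η := by
      intro η hη
      obtain ⟨t, ht⟩ := Finset.dvd_prod_of_mem
        (fun η => Function.minimalPeriod (fun x => f.eval x) η) hη
      rw [hm]
      rw [ht, Function.iterate_mul]
      exact Function.iterate_fixed Function.iterate_minimalPeriod t
    obtain ⟨x₀, hx₀ball, hx₀⟩ := hcase m hm0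
    -- the polynomial Q
    set Q : K[X] := S8.itc f m - X with hQdef
    have hQx : Q.eval x₀ = (fun y => f.eval y)^[m] x₀ - x₀ := by
      rw [hQdef, Polynomial.eval_sub, Polynomial.eval_X, S8.eval_itc]
    have hδx : (p:ℝ)⁻¹ ^ 3 * min ((p:ℝ)⁻¹ ^ 2) s < ‖Q.eval x₀‖ := by
      rw [hQx]; exact hx₀
    have hQne : Q ≠ 0 := by
      intro h0
      rw [h0] at hδx
      simp only [Polynomial.eval_zero, norm_zero] at hδx
      linarith
    have hcbQ : S8.CB 1 Q := by
      rw [hQdef]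
      exact (S8.cb_itc hcbf m).sub S8.CB.X
    have hitcne : S8.itc f m ≠ 0 := by
      intro h0
      have hl := S8.norm_leadingCoeff_itc hlead hdne m
      rw [h0] at hl
      simp at hl
    have hQlead : ‖Q.leadingCoeff‖ = 1 := by
      have hdlt : (X : K[X]).degree < (S8.itc f m).degree := by
        rw [Polynomial.degree_X, Polynomial.degree_eq_natDegree hitcne, S8.natDegree_itc, hdeg]
        exact_mod_cast (show (1:ℕ) < d ^ m from
          lt_of_lt_of_le (by omega) (le_trans hd (Nat.le_self_pow hm0.ne' d)))
      rw [hQdef, Polynomial.leadingCoeff_sub_of_degree_lt hdlt]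
      exact S8.norm_leadingCoeff_itc hlead hdne m
    -- all roots are integral
    have hroots_int : ∀ ρ ∈ Q.roots, ‖ρ‖ ≤ 1 := by
      intro ρ hρ
      have := (Polynomial.mem_roots'.mp hρ).2
      exact S8.root_le_one hcbQ hQlead this
    have hx₀int : ‖x₀‖ ≤ 1 := by
      have hh : x₀ = (x₀ - q) + q := by ring
      rw [hh]
      exact le_trans (IsUltrametricDist.norm_add_le_max _ _)
        (max_le (le_trans hx₀ball hs1.le) hq)
    -- evaluate the factorization at x₀
    have hsplits : Q.Splits := IsAlgClosed.splits Q
    have hfact := hsplits.eq_prod_roots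
    have hevalnorm : ‖Q.eval x₀‖
        = (Q.roots.map fun a => ‖x₀ - a‖).prod := by
      conv_lhs => rw [hfact]
      rw [Polynomial.eval_mul, Polynomial.eval_C, norm_mul, hQlead, one_mul,
        Polynomial.eval_multiset_prod, Multiset.map_map, S8.norm_multiset_prod',
        Multiset.map_map]
      congr 1
      refine Multiset.map_congr rfl (fun ρ _ => ?_)
      simp [Polynomial.eval_sub, Polynomial.eval_X, Polynomial.eval_C]
    -- bound the product
    have hprodle : (Q.roots.map fun a => ‖x₀ - a‖).prod
        ≤ s ^ (Multiset.card (Q.roots.filter (fun ρ => ‖ρ - q‖ ≤ s))) := by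
      refine S8.multiset_prod_le hs0.le Q.roots (fun ρ hρ => ?_) (fun ρ hρ hb => ?_)
      · have h1 : x₀ - ρ = x₀ - ρ := rfl
        refine le_trans (S8.norm_sub_le_max' x₀ ρ) (max_le hx₀int (hroots_int ρ hρ))
      · have : x₀ - ρ = (x₀ - q) - (ρ - q) := by ring
        rw [this]
        exact le_trans (S8.norm_sub_le_max' _ _) (max_le hx₀ball hb)
    -- `T` injects into the ball roots
    have hTle : C + 1 ≤ Multiset.card (Q.roots.filter (fun ρ => ‖ρ - q‖ ≤ s)) := by
      rw [← hTcard]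
      have hsubm : T.val ≤ Q.roots.filter (fun ρ => ‖ρ - q‖ ≤ s) := by
        rw [Multiset.le_iff_subset T.nodup]
        intro η hη
        have hηT : η ∈ T := hη
        rw [Multiset.mem_filter]
        constructor
        · rw [Polynomial.mem_roots']
          refine ⟨hQne, ?_⟩
          show Polynomial.eval η Q = 0
          rw [hQdef, Polynomial.eval_sub, Polynomial.eval_X, S8.eval_itc, hfixT η hηT,
            sub_self]
        · exact (hTsub hηT).2
      exact Multiset.card_le_card hsubm
    -- contradiction
    have hfin : ‖Q.eval x₀‖ ≤ s ^ (C + 1) := by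
      rw [hevalnorm]
      refine le_trans hprodle ?_
      exact pow_le_pow_of_le_one hs0.le hs1.le hTle
    linarith
end

section
/- Let d ≥ 2 be an integer and z ∈ ℂ with |z| ≥ 1, and set q = (z + z⁻¹)/2. Then (1/dⁿ)·log⁺|T_d⁽ⁿ⁾(q)| converges to log|z| as n → ∞, where T_d⁽ⁿ⁾ denotes the n-th iterate of T_d and log⁺ x = max{0, log x}. -/
open Polynomial Filter

lemma T_eval_half_add_inv (z : ℂ) (hz : z ≠ 0) (n : ℕ) :
    (Polynomial.Chebyshev.T ℂ n).eval ((z + z⁻¹) / 2) = (z ^ n + (z⁻¹) ^ n) / 2 := by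
  set L := Complex.log z with hL
  have e1 : -Complex.I * L * Complex.I = L := by
    linear_combination (-L) * Complex.I_mul_I
  have e2 : -(-Complex.I * L) * Complex.I = -L := by
    linear_combination L * Complex.I_mul_I
  have h1 : (z + z⁻¹) / 2 = Complex.cos (-Complex.I * L) := by
    rw [Complex.cos, e1, e2, Complex.exp_log hz, Complex.exp_neg, Complex.exp_log hz]
  have e3 : -Complex.I * ((n : ℂ) * L) * Complex.I = (n : ℂ) * L := by
    linear_combination (-(n:ℂ) * L) * Complex.I_mul_I
  have e4 : -(-Complex.I * ((n : ℂ) * L)) * Complex.I = -((n : ℂ) * L) := by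
    linear_combination ((n:ℂ) * L) * Complex.I_mul_I
  have h2 := Polynomial.Chebyshev.T_complex_cos (-Complex.I * L) (n : ℤ)
  rw [← h1] at h2
  rw [h2]
  have : ((n : ℤ) : ℂ) * (-Complex.I * L) = -Complex.I * ((n:ℂ) * L) := by push_cast; ring
  rw [this, Complex.cos, e3, e4, Complex.exp_nat_mul, Complex.exp_neg, Complex.exp_nat_mul,
    Complex.exp_log hz, ← inv_pow]

lemma T_iterate_eval (d : ℕ) (z : ℂ) (hz : z ≠ 0) (n : ℕ) :
    (fun x => (Polynomial.Chebyshev.T ℂ d).eval x)^[n] ((z + z⁻¹) / 2)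
      = (z ^ (d ^ n) + (z⁻¹) ^ (d ^ n)) / 2 := by
  induction n with
  | zero => simp
  | succ n ih =>
      rw [Function.iterate_succ_apply', ih]
      have hw : z ^ (d ^ n) ≠ 0 := pow_ne_zero _ hz
      have : (z⁻¹) ^ (d ^ n) = (z ^ (d ^ n))⁻¹ := by rw [inv_pow]
      rw [this, T_eval_half_add_inv _ hw d, ← pow_mul, ← inv_pow, ← pow_mul, pow_succ]

/-- for `d ≥ 2`, `|z| ≥ 1` and `q = (z + z⁻¹)/2`, the quantity
`(1/dⁿ)·log⁺|T_d⁽ⁿ⁾(q)|` converges to `log|z|` as `n → ∞`. -/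
theorem stmt12 (d : ℕ) (hd : 2 ≤ d) (z : ℂ) (hz : 1 ≤ ‖z‖)
    (q : ℂ) (hq : q = (z + z⁻¹) / 2) :
    Tendsto (fun n : ℕ =>
        (1 / (d : ℝ) ^ n) *
          max 0 (Real.log ‖
            ((fun x => (Polynomial.Chebyshev.T ℂ d).eval x)^[n] q)‖))
      atTop (nhds (Real.log ‖z‖)) := by
  have hz0 : z ≠ 0 := by
    intro h; rw [h] at hz; norm_num at hz
  set r := ‖z‖ with hr
  have hr1 : 1 ≤ r := hz
  subst hq
  have key : ∀ n : ℕ, (fun x => (Polynomial.Chebyshev.T ℂ d).eval x)^[n] ((z + z⁻¹) / 2)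
      = (z ^ (d ^ n) + (z⁻¹) ^ (d ^ n)) / 2 := T_iterate_eval d z hz0
  -- abbreviate the value
  set v : ℕ → ℝ := fun n => ‖(z ^ (d ^ n) + (z⁻¹) ^ (d ^ n)) / 2‖ with hv
  have hseq : (fun n : ℕ =>
        (1 / (d : ℝ) ^ n) *
          max 0 (Real.log ‖
            ((fun x => (Polynomial.Chebyshev.T ℂ d).eval x)^[n] ((z + z⁻¹) / 2))‖))
      = fun n => (1 / (d : ℝ) ^ n) * max 0 (Real.log (v n)) := by
    funext n; rw [key n]
  rw [hseq]
  have habs : ∀ n : ℕ, ‖(z⁻¹) ^ (d ^ n)‖ = r⁻¹ ^ (d ^ n) := by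
    intro n; rw [norm_pow, norm_inv]
  have hub : ∀ n, v n ≤ (r ^ (d ^ n) + r⁻¹ ^ (d ^ n)) / 2 := by
    intro n
    rw [hv]
    simp only [norm_div, Complex.norm_two]
    gcongr
    calc ‖z ^ d ^ n + z⁻¹ ^ d ^ n‖
        ≤ ‖z ^ d ^ n‖ + ‖z⁻¹ ^ d ^ n‖ := norm_add_le _ _
      _ = r ^ (d ^ n) + r⁻¹ ^ (d ^ n) := by rw [norm_pow, habs]
  rcases eq_or_lt_of_le hr1 with heq | hlt
  · -- |z| = 1 case: everything is 0
    have : Real.log r = 0 := by rw [← heq, Real.log_one]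
    rw [this]
    have : (fun n => (1 / (d : ℝ) ^ n) * max 0 (Real.log (v n))) = fun _ => (0 : ℝ) := by
      funext n
      have h1 : v n ≤ 1 := by
        refine (hub n).trans ?_
        rw [← heq]; norm_num
      have : Real.log (v n) ≤ 0 := Real.log_nonpos (norm_nonneg _) h1
      rw [max_eq_left this, mul_zero]
    rw [this]
    exact tendsto_const_nhds
  · -- |z| > 1 case
    have hlb : ∀ n, (r ^ (d ^ n) - r⁻¹ ^ (d ^ n)) / 2 ≤ v n := by
      intro n
      rw [hv]
      simp only [norm_div, Complex.norm_two]
      gcongr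
      have h := norm_sub_norm_le (z ^ d ^ n) (-(z⁻¹ ^ d ^ n))
      rw [sub_neg_eq_add, norm_neg] at h
      have e : ‖z ^ d ^ n‖ = r ^ d ^ n := by rw [norm_pow]
      have e2 := habs n
      linarith
    -- d^n → ∞
    have hdtop : Tendsto (fun n : ℕ => (d : ℕ) ^ n) atTop atTop :=
      tendsto_pow_atTop_atTop_of_one_lt hd
    have hrtop : Tendsto (fun n : ℕ => r ^ (d ^ n)) atTop atTop :=
      (tendsto_pow_atTop_atTop_of_one_lt hlt).comp hdtop
    have hev : ∀ᶠ n in atTop, 4 ≤ r ^ (d ^ n) := hrtop.eventually_ge_atTop 4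
    have hr0 : 0 < r := lt_of_lt_of_le one_pos hr1
    -- eventually bounds on the sequence
    have hmain : ∀ᶠ n in atTop,
        Real.log r - Real.log 4 / (d : ℝ) ^ n
          ≤ (1 / (d : ℝ) ^ n) * max 0 (Real.log (v n)) ∧
        (1 / (d : ℝ) ^ n) * max 0 (Real.log (v n)) ≤ Real.log r := by
      filter_upwards [hev] with n h4
      have hN : (0 : ℝ) < (d : ℝ) ^ n := by positivity
      have hrp : (0:ℝ) < r ^ (d ^ n) := by positivity
      have hinv : r⁻¹ ^ (d ^ n) ≤ 1 := by
        apply pow_le_one₀ (by positivity)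
        exact inv_le_one_of_one_le₀ hr1
      have hinv2 : r⁻¹ ^ (d ^ n) = (r ^ (d ^ n))⁻¹ := by rw [inv_pow]
      have hinv3 : (r ^ (d ^ n))⁻¹ ≤ r ^ (d ^ n) / 2 := by
        have h1 : (r ^ (d ^ n))⁻¹ ≤ 1 := by rw [← hinv2]; exact hinv
        nlinarith
      -- lower bound on v: v n ≥ r^(d^n)/4
      have hlow : r ^ (d ^ n) / 4 ≤ v n := by
        refine le_trans ?_ (hlb n)
        rw [hinv2]
        nlinarith
      have hv1 : 1 ≤ v n := le_trans (by nlinarith) hlow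
      have hvpos : 0 < v n := lt_of_lt_of_le one_pos hv1
      have hlog0 : 0 ≤ Real.log (v n) := Real.log_nonneg hv1
      rw [max_eq_right hlog0]
      constructor
      · -- lower bound
        have := Real.log_le_log (by positivity) hlow
        have hlog4 : Real.log (r ^ (d ^ n) / 4) = (d ^ n : ℝ) * Real.log r - Real.log 4 := by
          rw [Real.log_div (by positivity) (by norm_num), Real.log_pow]
          push_cast; ring
        rw [hlog4] at this
        push_cast at this
        rw [show (1:ℝ)/(d:ℝ)^n * Real.log (v n) = Real.log (v n) / (d:ℝ)^n from by ring,
          le_div_iff₀ hN]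
        have e : (Real.log r - Real.log 4 / (d:ℝ)^n) * (d:ℝ)^n
            = (d:ℝ)^n * Real.log r - Real.log 4 := by field_simp
        rw [e]; exact this
      · -- upper bound: v n ≤ r^(d^n)
        have hub2 : v n ≤ r ^ (d ^ n) := by
          refine (hub n).trans ?_
          rw [hinv2]
          nlinarith
        have := Real.log_le_log hvpos hub2
        rw [Real.log_pow] at this
        rw [one_div, inv_mul_le_iff₀ hN]
        calc Real.log (v n) ≤ (d ^ n : ℝ) * Real.log r := by push_cast at this ⊢; exact this
          _ = (d:ℝ)^n * Real.log r := by push_cast; ring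
    -- squeeze
    have hlowlim : Tendsto (fun n : ℕ => Real.log r - Real.log 4 / (d : ℝ) ^ n) atTop
        (nhds (Real.log r)) := by
      have : Tendsto (fun n : ℕ => Real.log 4 / (d : ℝ) ^ n) atTop (nhds 0) := by
        apply Tendsto.div_atTop tendsto_const_nhds
        apply tendsto_pow_atTop_atTop_of_one_lt
        exact_mod_cast (by omega : 1 < d)
      simpa using tendsto_const_nhds.sub this
    exact tendsto_of_tendsto_of_tendsto_of_le_of_le' hlowlim tendsto_const_nhds
      (hmain.mono fun n h => h.1) (hmain.mono fun n h => h.2)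
end

section
/- Let z ∈ ℂ with |z| ≥ 1 and set q = (z + z⁻¹)/2. Then (1/2π)·∫₀^{2π} log|cos θ − q| dθ = log|z| − log 2. -/
open MeasureTheory intervalIntegral Set
open scoped Real

noncomputable section

/-- Compatibility: the complex absolute value as a bundled absolute value. -/
noncomputable def Complex.abs : AbsoluteValue ℂ ℝ where
  toFun := fun z => ‖z‖
  map_mul' := norm_mul
  nonneg' := norm_nonneg
  eq_zero' _ := norm_eq_zero
  add_le' := norm_add_le

lemma Complex.abs_apply (z : ℂ) : Complex.abs z = Real.sqrt (Complex.normSq z) :=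
  Complex.norm_def z

lemma Complex.continuous_abs : Continuous Complex.abs := continuous_norm

lemma Complex.re_le_abs (z : ℂ) : z.re ≤ Complex.abs z := Complex.re_le_norm z

lemma Complex.norm_eq_abs (z : ℂ) : ‖z‖ = Complex.abs z := rfl

lemma Complex.abs_exp_ofReal_mul_I (x : ℝ) : Complex.abs (Complex.exp (x * Complex.I)) = 1 :=
  Complex.norm_exp_ofReal_mul_I x

lemma Complex.abs_conj (z : ℂ) : Complex.abs ((starRingEnd ℂ) z) = Complex.abs z :=
  Complex.norm_conj z

lemma Complex.abs_two : Complex.abs 2 = 2 := Complex.norm_two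

lemma Complex.abs_mul_exp_arg_mul_I (x : ℂ) :
    (Complex.abs x : ℂ) * Complex.exp (Complex.arg x * Complex.I) = x :=
  Complex.norm_mul_exp_arg_mul_I x

/-- log is interval integrable on any interval. -/
lemma logInt (a b : ℝ) : IntervalIntegrable Real.log volume a b := by
  suffices h : ∀ c : ℝ, 0 ≤ c → IntervalIntegrable Real.log volume 0 c by
    have key : ∀ c : ℝ, IntervalIntegrable Real.log volume 0 c := by
      intro c
      rcases le_or_gt 0 c with hc | hc
      · exact h c hc
      · have h2 := ((h (-c) (by linarith)).comp_mul_left (c := -1))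
        simp only [neg_one_mul, zero_div, neg_div_neg_eq, div_one] at h2
        simpa only [show (fun x : ℝ => Real.log (-x)) = Real.log from
          funext fun x => Real.log_neg_eq_log x] using h2
    exact (key a).symm.trans (key b)
  intro c hc
  have hdom : IntervalIntegrable (fun x : ℝ => 2 * x ^ (-(1:ℝ)/2) + |x|) volume 0 c :=
    ((intervalIntegrable_rpow' (by norm_num)).const_mul 2).add
      (continuous_abs.intervalIntegrable _ _)
  refine hdom.mono_fun Real.measurable_log.aestronglyMeasurable ?_
  rw [uIoc_of_le hc]
  filter_upwards [ae_restrict_mem measurableSet_Ioc] with x hx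
  have hx0 : 0 < x := hx.1
  have hrp : 0 < x ^ (-(1:ℝ)/2) := Real.rpow_pos_of_pos hx0 _
  have h1 : |Real.log x| ≤ 2 * x ^ (-(1:ℝ)/2) + |x| := by
    rcases le_or_gt x 1 with h | h
    · have habs : |Real.log x| = -Real.log x := abs_of_nonpos (Real.log_nonpos hx0.le h)
      have hlr : Real.log (x ^ (-(1:ℝ)/2)) = (-(1:ℝ)/2) * Real.log x := Real.log_rpow hx0 _
      have hle : Real.log (x ^ (-(1:ℝ)/2)) ≤ x ^ (-(1:ℝ)/2) - 1 :=
        Real.log_le_sub_one_of_pos hrp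
      nlinarith [abs_nonneg x]
    · have habs : |Real.log x| = Real.log x := abs_of_nonneg (Real.log_nonneg h.le)
      have h2 : Real.log x ≤ x - 1 := Real.log_le_sub_one_of_pos hx0
      rw [habs, abs_of_nonneg hx0.le]
      nlinarith
  calc ‖Real.log x‖ = |Real.log x| := rfl
    _ ≤ 2 * x ^ (-(1:ℝ)/2) + |x| := h1
    _ ≤ ‖2 * x ^ (-(1:ℝ)/2) + |x|‖ := le_abs_self _

lemma abs_one_sub_exp (θ : ℝ) :
    Complex.abs (1 - Complex.exp (θ * Complex.I)) = 2 * |Real.sin (θ/2)| := by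
  have hre : (1 - Complex.exp (θ * Complex.I)).re = 1 - Real.cos θ := by
    simp [Complex.exp_ofReal_mul_I_re]
  have him : (1 - Complex.exp (θ * Complex.I)).im = -Real.sin θ := by
    simp [Complex.exp_ofReal_mul_I_im]
  rw [Complex.abs_apply, Complex.normSq_apply, hre, him]
  have hs : Real.sin (θ/2) ^ 2 = 1/2 - Real.cos θ / 2 := by
    have := Real.sin_sq_eq_half_sub (θ/2)
    rwa [show 2 * (θ/2) = θ by ring] at this
  have h1 : (1 - Real.cos θ) * (1 - Real.cos θ) + -Real.sin θ * -Real.sin θ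
      = (2 * |Real.sin (θ/2)|) ^ 2 := by
    have hpy : Real.sin θ ^ 2 = 1 - Real.cos θ ^ 2 := Real.sin_sq θ
    have habs : |Real.sin (θ/2)| ^ 2 = Real.sin (θ/2) ^ 2 := sq_abs _
    nlinarith
  rw [h1, Real.sqrt_sq (by positivity)]

lemma sin_lb {u : ℝ} (h0 : 0 ≤ u) (h1 : u ≤ Real.pi) :
    2 * (u * (Real.pi - u)) ≤ Real.pi ^ 2 * Real.sin u := by
  have hpi := Real.pi_pos
  rcases le_or_gt u (Real.pi / 2) with h | h
  · have h2 := Real.mul_le_sin h0 h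
    have h3 : 2 * u ≤ Real.pi * Real.sin u := by
      rw [div_mul_eq_mul_div, div_le_iff₀ hpi] at h2; linarith
    nlinarith [mul_le_mul_of_nonneg_left h3 hpi.le, mul_nonneg h0 h0]
  · have h2 := Real.mul_le_sin (x := Real.pi - u) (by linarith) (by linarith)
    rw [Real.sin_pi_sub] at h2
    have h3 : 2 * (Real.pi - u) ≤ Real.pi * Real.sin u := by
      rw [div_mul_eq_mul_div, div_le_iff₀ hpi] at h2; linarith
    nlinarith [mul_le_mul_of_nonneg_left h3 hpi.le,
      mul_nonneg (sub_nonneg.2 h1) (sub_nonneg.2 h1)]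

lemma abs_one_sub_exp_pos {θ : ℝ} (h0 : 0 < θ) (h2 : θ < 2 * Real.pi) :
    Complex.abs (1 - Complex.exp (θ * Complex.I)) = 2 * Real.sin (θ/2) ∧
      0 < Real.sin (θ/2) := by
  have hpi := Real.pi_pos
  have hs : 0 < Real.sin (θ/2) :=
    Real.sin_pos_of_pos_of_lt_pi (by linarith) (by linarith)
  rw [abs_one_sub_exp, abs_of_pos hs]
  exact ⟨rfl, hs⟩

/-- The function `G θ = log |1 - e^{iθ}|`. -/
noncomputable def G (θ : ℝ) : ℝ := Real.log (Complex.abs (1 - Complex.exp (θ * Complex.I)))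

lemma G_meas : Measurable G := by
  apply Real.measurable_log.comp
  exact (Complex.continuous_abs.comp
    (continuous_const.sub (Complex.continuous_exp.comp
      (Complex.continuous_ofReal.mul continuous_const)))).measurable

lemma G_int : IntervalIntegrable G volume 0 (2 * Real.pi) := by
  have hpi := Real.pi_pos
  set C : ℝ := Real.log 2 + 2 * Real.log Real.pi + 4 * Real.log (2 * Real.pi) with hC
  have hdom : IntervalIntegrable
      (fun θ : ℝ => C - Real.log θ - Real.log (2 * Real.pi - θ)) volume 0 (2 * Real.pi) := by
    refine ((intervalIntegrable_const.sub (logInt 0 (2*Real.pi))).sub ?_)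
    have := ((logInt 0 (2 * Real.pi)).comp_sub_left (2 * Real.pi)).symm
    simpa using this
  refine hdom.mono_fun G_meas.aestronglyMeasurable ?_
  rw [uIoc_of_le (by linarith)]
  filter_upwards [ae_restrict_mem measurableSet_Ioc] with θ hθ
  have hθ0 : 0 < θ := hθ.1
  have l2pi : 0 ≤ Real.log (2 * Real.pi) := Real.log_nonneg (by linarith [Real.pi_gt_three])
  have lpi : 0 ≤ Real.log Real.pi := Real.log_nonneg (by linarith [Real.pi_gt_three])
  have l2 : 0 ≤ Real.log 2 := Real.log_nonneg (by norm_num)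
  rcases eq_or_lt_of_le hθ.2 with heq | hlt
  · have hsin0 : Real.sin (θ/2) = 0 := by rw [heq]; simp [Real.sin_pi]
    have hG : G θ = 0 := by rw [G, abs_one_sub_exp, hsin0]; simp
    rw [hG]
    simp only [norm_zero]
    exact norm_nonneg _
  · obtain ⟨habs, hs⟩ := abs_one_sub_exp_pos hθ0 hlt
    set s : ℝ := 2 * Real.sin (θ/2) with hsdef
    have hspos : 0 < s := by positivity
    have hsle : s ≤ 2 := by
      have := Real.sin_le_one (θ/2); linarith
    have hlow : θ * (2 * Real.pi - θ) / Real.pi ^ 2 ≤ s := by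
      have hsl := sin_lb (u := θ/2) (by linarith) (by linarith)
      have hp2 : (0:ℝ) < Real.pi ^ 2 := by positivity
      rw [div_le_iff₀ hp2, hsdef]
      nlinarith [hsl]
    have h2θ : 0 < 2 * Real.pi - θ := by linarith
    have hlowpos : 0 < θ * (2 * Real.pi - θ) / Real.pi ^ 2 :=
      div_pos (mul_pos hθ0 h2θ) (by positivity)
    have hGeq : G θ = Real.log s := by rw [G, habs]
    have hup : Real.log s ≤ Real.log 2 := Real.log_le_log hspos hsle
    have hlo : Real.log θ + Real.log (2 * Real.pi - θ) - 2 * Real.log Real.pi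
        ≤ Real.log s := by
      have h1 : Real.log (θ * (2 * Real.pi - θ) / Real.pi ^ 2) ≤ Real.log s :=
        Real.log_le_log hlowpos hlow
      rw [Real.log_div (ne_of_gt (mul_pos hθ0 h2θ)) (by positivity),
        Real.log_mul (ne_of_gt hθ0) (ne_of_gt h2θ), Real.log_pow] at h1
      push_cast at h1
      linarith
    have hlogθ : Real.log θ ≤ Real.log (2 * Real.pi) := Real.log_le_log hθ0 hθ.2
    have hlogθ' : Real.log (2 * Real.pi - θ) ≤ Real.log (2 * Real.pi) :=
      Real.log_le_log (by linarith) (by linarith)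
    have hD : 0 ≤ C - Real.log θ - Real.log (2 * Real.pi - θ) := by linarith
    rw [Real.norm_eq_abs, Real.norm_eq_abs, hGeq, abs_of_nonneg hD, abs_le]
    constructor <;> linarith

lemma expEqCountable (c : ℂ) : Set.Countable {θ : ℝ | Complex.exp (θ * Complex.I) = c} := by
  by_cases h : ∃ θ₀ : ℝ, Complex.exp (θ₀ * Complex.I) = c
  · obtain ⟨θ₀, h₀⟩ := h
    apply Set.Countable.mono _ (Set.countable_range fun n : ℤ => θ₀ + n * (2 * Real.pi))
    intro θ hθ
    have hθ' : Complex.exp (θ * Complex.I) = Complex.exp (θ₀ * Complex.I) := by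
      rw [hθ.out, h₀]
    obtain ⟨n, hn⟩ := Complex.exp_eq_exp_iff_exists_int.mp hθ'
    have him := congrArg Complex.im hn
    simp [Complex.add_im, Complex.mul_im, Complex.mul_re] at him
    exact ⟨n, him.symm⟩
  · have : {θ : ℝ | Complex.exp (θ * Complex.I) = c} = ∅ := by
      ext θ; simp only [Set.mem_setOf_eq, Set.mem_empty_iff_false, iff_false]
      exact fun hc => h ⟨θ, hc⟩
    rw [this]; exact Set.countable_empty

lemma G_periodic : Function.Periodic G (2 * Real.pi) := by
  intro θ
  simp only [G]
  congr 3
  have : ((θ + 2 * Real.pi : ℝ) : ℂ) * Complex.I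
      = θ * Complex.I + 2 * Real.pi * Complex.I := by push_cast; ring
  rw [this, Complex.exp_add, Complex.exp_two_pi_mul_I, mul_one]

lemma G_integral_zero : ∫ θ in (0:ℝ)..(2*Real.pi), G θ = 0 := by
  have hpi := Real.pi_pos
  set H : ℝ → ℝ := fun θ => Real.log (Complex.abs (1 + Complex.exp (θ * Complex.I))) with hH
  have hGshift : ∀ θ : ℝ, G (θ + Real.pi) = H θ := by
    intro θ
    simp only [G, hH]
    congr 2
    have h1 : ((θ + Real.pi : ℝ) : ℂ) * Complex.I
        = θ * Complex.I + Real.pi * Complex.I := by push_cast; ring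
    rw [h1, Complex.exp_add, Complex.exp_pi_mul_I]
    ring
  have hsub1 : Set.uIcc (0:ℝ) Real.pi ⊆ Set.uIcc (0:ℝ) (2*Real.pi) := by
    rw [Set.uIcc_of_le (by linarith), Set.uIcc_of_le (by linarith)]
    exact Set.Icc_subset_Icc le_rfl (by linarith)
  have hsub2 : Set.uIcc Real.pi (2*Real.pi) ⊆ Set.uIcc (0:ℝ) (2*Real.pi) := by
    rw [Set.uIcc_of_le (by linarith), Set.uIcc_of_le (by linarith)]
    exact Set.Icc_subset_Icc (by linarith) le_rfl
  have hIntG1 : IntervalIntegrable G volume 0 Real.pi := G_int.mono_set hsub1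
  have hIntG2 : IntervalIntegrable G volume Real.pi (2*Real.pi) := G_int.mono_set hsub2
  have hIntH : IntervalIntegrable H volume 0 Real.pi := by
    have h2 := hIntG2.comp_add_right Real.pi
    rw [funext hGshift] at h2
    simpa [two_mul] using h2
  have hsplit : ∫ θ in (0:ℝ)..(2*Real.pi), G θ
      = (∫ θ in (0:ℝ)..Real.pi, G θ) + ∫ θ in Real.pi..(2*Real.pi), G θ :=
    (integral_add_adjacent_intervals hIntG1 hIntG2).symm
  have hCB : ∫ θ in Real.pi..(2*Real.pi), G θ = ∫ θ in (0:ℝ)..Real.pi, H θ := by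
    have h3 := intervalIntegral.integral_comp_add_right (a := (0:ℝ)) (b := Real.pi)
      (f := G) Real.pi
    rw [funext hGshift, zero_add] at h3
    rw [two_mul]
    exact h3.symm
  have hdou : ∫ θ in (0:ℝ)..Real.pi, G (2*θ)
      = (2:ℝ)⁻¹ * ∫ θ in (0:ℝ)..(2*Real.pi), G θ := by
    have h4 := intervalIntegral.integral_comp_mul_left (a := (0:ℝ)) (b := Real.pi)
      (f := G) (c := 2) two_ne_zero
    rw [h4, mul_zero]
    simp [smul_eq_mul]
  have hbad : Set.Countable ({θ : ℝ | Complex.exp (θ * Complex.I) = 1}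
      ∪ {θ : ℝ | Complex.exp (θ * Complex.I) = -1}) :=
    (expEqCountable 1).union (expEqCountable (-1))
  have hzero : volume ({θ : ℝ | Complex.exp (θ * Complex.I) = 1}
      ∪ {θ : ℝ | Complex.exp (θ * Complex.I) = -1}) = 0 :=
    Set.Countable.measure_zero hbad _
  have hae : ∀ᵐ θ ∂volume, θ ∈ Set.uIoc (0:ℝ) Real.pi → G (2*θ) = G θ + H θ := by
    filter_upwards [measure_eq_zero_iff_ae_notMem.mp hzero] with θ hθ _
    have h1 : Complex.exp (θ * Complex.I) ≠ 1 := fun hc => hθ (Or.inl hc)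
    have h2 : Complex.exp (θ * Complex.I) ≠ -1 := fun hc => hθ (Or.inr hc)
    have hfac : 1 - Complex.exp ((2*θ : ℝ) * Complex.I)
        = (1 - Complex.exp (θ * Complex.I)) * (1 + Complex.exp (θ * Complex.I)) := by
      have : ((2*θ : ℝ) : ℂ) * Complex.I = θ * Complex.I + θ * Complex.I := by
        push_cast; ring
      rw [this, Complex.exp_add]
      ring
    have ha : Complex.abs (1 - Complex.exp (θ * Complex.I)) ≠ 0 := by
      simpa [sub_eq_zero] using fun hc => h1 hc.symm
    have hb : Complex.abs (1 + Complex.exp (θ * Complex.I)) ≠ 0 := by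
      simp only [ne_eq, map_eq_zero]
      intro hc
      exact h2 (by linear_combination hc)
    simp only [G, hH]
    rw [hfac, map_mul, Real.log_mul ha hb]
  have hGH : ∫ θ in (0:ℝ)..Real.pi, G (2*θ)
      = (∫ θ in (0:ℝ)..Real.pi, G θ) + ∫ θ in (0:ℝ)..Real.pi, H θ := by
    rw [intervalIntegral.integral_congr_ae hae]
    exact intervalIntegral.integral_add hIntG1 hIntH
  set I := ∫ θ in (0:ℝ)..(2*Real.pi), G θ
  set A := ∫ θ in (0:ℝ)..Real.pi, G θ
  set B := ∫ θ in (0:ℝ)..Real.pi, H θ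
  have e1 : I = A + B := by rw [hsplit, hCB]
  have e2 : (2:ℝ)⁻¹ * I = A + B := by rw [← hdou, hGH]
  linarith [e1, e2]

lemma meanZero {w : ℂ} (hw : Complex.abs w < 1) :
    ∫ θ in (0:ℝ)..(2*Real.pi),
      Real.log (Complex.abs (1 - w * Complex.exp (θ * Complex.I))) = 0 := by
  set f : ℂ → ℂ := fun ζ => Complex.log (1 - w * ζ) with hf
  have hpos : ∀ ζ : ℂ, Complex.abs ζ ≤ 1 → 0 < (1 - w * ζ).re := by
    intro ζ hζ
    have h1 : (w * ζ).re ≤ Complex.abs (w * ζ) := Complex.re_le_abs _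
    have h2 : Complex.abs (w * ζ) ≤ Complex.abs w := by
      rw [map_mul]
      calc Complex.abs w * Complex.abs ζ ≤ Complex.abs w * 1 :=
        mul_le_mul_of_nonneg_left hζ (Complex.abs.nonneg w)
      _ = Complex.abs w := mul_one _
    simp only [Complex.sub_re, Complex.one_re]
    linarith
  have hdiff : ∀ ζ : ℂ, Complex.abs ζ ≤ 1 → DifferentiableAt ℂ f ζ := by
    intro ζ hζ
    apply DifferentiableAt.comp (f := fun ζ : ℂ => 1 - w * ζ) (g := Complex.log)
    · exact Complex.differentiableAt_log (Or.inl (hpos ζ hζ))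
    · exact (differentiableAt_const _).sub ((differentiableAt_const _).mul differentiableAt_id)
  have hc : ContinuousOn f (Metric.closedBall 0 1) := fun ζ hζ =>
    (hdiff ζ (by simpa [Complex.norm_eq_abs] using Metric.mem_closedBall.mp hζ)).continuousAt.continuousWithinAt
  have hd : ∀ ζ ∈ Metric.ball (0:ℂ) 1 \ (∅ : Set ℂ), DifferentiableAt ℂ f ζ := by
    intro ζ hζ
    exact hdiff ζ (by simpa [Complex.norm_eq_abs] using (Metric.mem_ball.mp hζ.1).le)
  have happly := Complex.circleIntegral_sub_center_inv_smul_of_differentiable_on_off_countable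
    one_pos Set.countable_empty hc hd
  have hf0 : f 0 = 0 := by simp [hf]
  rw [hf0, smul_zero] at happly
  rw [circleIntegral] at happly
  simp only [deriv_circleMap, circleMap_zero, Complex.ofReal_one, one_mul, sub_zero, smul_eq_mul] at happly
  have heq : ∀ θ : ℝ, Complex.exp (θ * Complex.I) * Complex.I *
      ((Complex.exp (θ * Complex.I))⁻¹ * f (Complex.exp (θ * Complex.I)))
      = Complex.I * f (Complex.exp (θ * Complex.I)) := by
    intro θ
    have hne := Complex.exp_ne_zero (θ * Complex.I)
    field_simp
  rw [intervalIntegral.integral_congr (fun θ _ => heq θ),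
    intervalIntegral.integral_const_mul] at happly
  have hint : ∫ θ in (0:ℝ)..(2*Real.pi), f (Complex.exp (θ * Complex.I)) = 0 := by
    rcases mul_eq_zero.mp happly with h | h
    · exact absurd h Complex.I_ne_zero
    · exact h
  have hcont : Continuous fun θ : ℝ => f (Complex.exp (θ * Complex.I)) := by
    rw [continuous_iff_continuousAt]
    intro θ
    have h1 : Complex.abs (Complex.exp (θ * Complex.I)) ≤ 1 :=
      (Complex.abs_exp_ofReal_mul_I θ).le
    have hInner : Continuous (fun θ : ℝ => Complex.exp (θ * Complex.I)) := by fun_prop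
    exact ContinuousAt.comp (g := f) (f := fun θ : ℝ => Complex.exp (θ * Complex.I)) (x := θ)
      (hdiff _ h1).continuousAt hInner.continuousAt
  have hre := Complex.reCLM.intervalIntegral_comp_comm
    (hcont.intervalIntegrable 0 (2*Real.pi) : IntervalIntegrable _ volume _ _)
  rw [hint] at hre
  simp only [Complex.reCLM_apply, map_zero] at hre
  have hfin : ∫ θ in (0:ℝ)..(2*Real.pi),
      Real.log (Complex.abs (1 - w * Complex.exp (θ * Complex.I)))
      = ∫ x in (0:ℝ)..(2*Real.pi), (f (Complex.exp (x * Complex.I))).re := by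
    apply intervalIntegral.integral_congr
    intro θ _
    exact (Complex.log_re _).symm
  rw [hfin, hre]

lemma circle_lt {w : ℂ} (hw : Complex.abs w < 1) :
    IntervalIntegrable (fun θ : ℝ => Real.log (Complex.abs (Complex.exp (θ * Complex.I) - w)))
      volume 0 (2*Real.pi) ∧
    ∫ θ in (0:ℝ)..(2*Real.pi), Real.log (Complex.abs (Complex.exp (θ * Complex.I) - w)) = 0 := by
  have hfun : ∀ θ : ℝ, Complex.abs (Complex.exp (θ * Complex.I) - w)
      = Complex.abs (1 - (starRingEnd ℂ) w * Complex.exp (θ * Complex.I)) := by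
    intro θ
    have hconj : (starRingEnd ℂ) (Complex.exp (θ * Complex.I))
        = Complex.exp (-(θ * Complex.I)) := by
      rw [← Complex.exp_conj]
      congr 1
      rw [map_mul, Complex.conj_I, Complex.conj_ofReal]
      ring
    have hprod : Complex.exp (θ * Complex.I) * Complex.exp (-(θ * Complex.I)) = 1 := by
      rw [← Complex.exp_add, add_neg_cancel, Complex.exp_zero]
    have h1 : Complex.exp (θ * Complex.I) - w
        = Complex.exp (θ * Complex.I)
          * (starRingEnd ℂ) (1 - (starRingEnd ℂ) w * Complex.exp (θ * Complex.I)) := by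
      rw [map_sub, map_one, map_mul, Complex.conj_conj, hconj]
      linear_combination w * hprod
    rw [h1, map_mul, Complex.abs_exp_ofReal_mul_I, one_mul, Complex.abs_conj]
  have hlb : ∀ θ : ℝ, 1 - Complex.abs w ≤ Complex.abs (Complex.exp (θ * Complex.I) - w) := by
    intro θ
    have := norm_sub_norm_le (Complex.exp (θ * Complex.I)) w
    simpa [Complex.norm_eq_abs, Complex.abs_exp_ofReal_mul_I] using this
  have hcont : Continuous
      (fun θ : ℝ => Real.log (Complex.abs (Complex.exp (θ * Complex.I) - w))) := by
    apply Continuous.log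
    · exact Complex.continuous_abs.comp ((by fun_prop : Continuous fun θ : ℝ =>
        Complex.exp (θ * Complex.I)).sub continuous_const)
    · intro θ
      have := hlb θ
      linarith
  constructor
  · exact hcont.intervalIntegrable _ _
  · rw [intervalIntegral.integral_congr (g := fun θ : ℝ =>
      Real.log (Complex.abs (1 - (starRingEnd ℂ) w * Complex.exp (θ * Complex.I))))
      (fun θ _ => by rw [hfun θ])]
    exact meanZero (by rwa [Complex.abs_conj])

lemma circle_gt {w : ℂ} (hw : 1 < Complex.abs w) :
    IntervalIntegrable (fun θ : ℝ => Real.log (Complex.abs (Complex.exp (θ * Complex.I) - w)))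
      volume 0 (2*Real.pi) ∧
    ∫ θ in (0:ℝ)..(2*Real.pi), Real.log (Complex.abs (Complex.exp (θ * Complex.I) - w))
      = 2 * Real.pi * Real.log (Complex.abs w) := by
  have hw0 : w ≠ 0 := by
    intro h; rw [h] at hw; simp at hw; linarith
  have habsw : (0:ℝ) < Complex.abs w := by positivity
  have hinv : Complex.abs w⁻¹ < 1 := by
    rw [map_inv₀]
    rw [inv_lt_one_iff₀]
    right; exact hw
  have hfac : ∀ θ : ℝ, Complex.abs (Complex.exp (θ * Complex.I) - w)
      = Complex.abs w * Complex.abs (1 - w⁻¹ * Complex.exp (θ * Complex.I)) := by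
    intro θ
    calc Complex.abs (Complex.exp (θ * Complex.I) - w)
        = Complex.abs (w * (1 - w⁻¹ * Complex.exp (θ * Complex.I))) := by
          rw [Complex.abs.map_sub]
          congr 1
          field_simp
      _ = Complex.abs w * Complex.abs (1 - w⁻¹ * Complex.exp (θ * Complex.I)) := map_mul _ _ _
  have hlb : ∀ θ : ℝ, 0 < Complex.abs (1 - w⁻¹ * Complex.exp (θ * Complex.I)) := by
    intro θ
    have h1 := norm_sub_norm_le (1 : ℂ) (w⁻¹ * Complex.exp (θ * Complex.I))
    have h2 : Complex.abs (w⁻¹ * Complex.exp (θ * Complex.I)) = Complex.abs w⁻¹ := by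
      rw [map_mul, Complex.abs_exp_ofReal_mul_I, mul_one]
    simp only [Complex.norm_eq_abs, map_one] at h1
    rw [h2] at h1
    linarith
  have hpt : ∀ θ : ℝ, Real.log (Complex.abs (Complex.exp (θ * Complex.I) - w))
      = Real.log (Complex.abs w)
        + Real.log (Complex.abs (1 - w⁻¹ * Complex.exp (θ * Complex.I))) := by
    intro θ
    rw [hfac θ, Real.log_mul (ne_of_gt habsw) (ne_of_gt (hlb θ))]
  have hcont2 : Continuous (fun θ : ℝ =>
      Real.log (Complex.abs (1 - w⁻¹ * Complex.exp (θ * Complex.I)))) := by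
    apply Continuous.log
    · exact Complex.continuous_abs.comp (continuous_const.sub (continuous_const.mul
        (by fun_prop : Continuous fun θ : ℝ => Complex.exp (θ * Complex.I))))
    · exact fun θ => ne_of_gt (hlb θ)
  have hcont : Continuous
      (fun θ : ℝ => Real.log (Complex.abs (Complex.exp (θ * Complex.I) - w))) := by
    have : (fun θ : ℝ => Real.log (Complex.abs (Complex.exp (θ * Complex.I) - w)))
        = fun θ : ℝ => Real.log (Complex.abs w)
          + Real.log (Complex.abs (1 - w⁻¹ * Complex.exp (θ * Complex.I))) := funext hpt
    rw [this]
    exact continuous_const.add hcont2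
  refine ⟨hcont.intervalIntegrable _ _, ?_⟩
  rw [intervalIntegral.integral_congr (fun θ _ => hpt θ)]
  rw [intervalIntegral.integral_add (continuous_const.intervalIntegrable _ _)
    (hcont2.intervalIntegrable _ _)]
  rw [meanZero hinv, intervalIntegral.integral_const, add_zero, smul_eq_mul, sub_zero]

lemma circle_eq {w : ℂ} (hw : Complex.abs w = 1) :
    IntervalIntegrable (fun θ : ℝ => Real.log (Complex.abs (Complex.exp (θ * Complex.I) - w)))
      volume 0 (2*Real.pi) ∧
    ∫ θ in (0:ℝ)..(2*Real.pi), Real.log (Complex.abs (Complex.exp (θ * Complex.I) - w)) = 0 := by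
  have hpi := Real.pi_pos
  set α := Complex.arg w with hα
  have hw' : w = Complex.exp (α * Complex.I) := by
    rw [← Complex.abs_mul_exp_arg_mul_I w, hw, Complex.ofReal_one, one_mul]
  have hfun : ∀ θ : ℝ, Real.log (Complex.abs (Complex.exp (θ * Complex.I) - w))
      = G (θ - α) := by
    intro θ
    have h1 : Complex.exp (θ * Complex.I) - Complex.exp (α * Complex.I)
        = Complex.exp (α * Complex.I) * (Complex.exp (((θ - α : ℝ)) * Complex.I) - 1) := by
      rw [mul_sub, mul_one, ← Complex.exp_add]
      congr 2
      push_cast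
      ring
    have habs2 : Complex.abs (Complex.exp (θ * Complex.I) - Complex.exp (α * Complex.I))
        = Complex.abs (1 - Complex.exp (((θ - α : ℝ)) * Complex.I)) := by
      rw [h1, map_mul, Complex.abs_exp_ofReal_mul_I, one_mul, Complex.abs.map_sub]
    simp only [G]
    rw [hw', habs2]
  -- integrability of G over a long interval
  have hIntLeft : IntervalIntegrable G volume (-(2*Real.pi)) 0 := by
    have h2 := G_int.comp_add_right (2*Real.pi)
    have hfe : (fun x : ℝ => G (x + 2*Real.pi)) = G := funext fun x => G_periodic x
    rw [hfe] at h2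
    simpa using h2
  have hIntRight : IntervalIntegrable G volume (2*Real.pi) (4*Real.pi) := by
    have h2 := G_int.comp_add_right (-(2*Real.pi))
    have hfe : (fun x : ℝ => G (x + -(2*Real.pi))) = G := by
      funext x
      have := G_periodic (x - 2*Real.pi)
      rw [sub_add_cancel] at this
      rw [show x + -(2*Real.pi) = x - 2*Real.pi by ring, this]
    rw [hfe] at h2
    have : (0:ℝ) - -(2*Real.pi) = 2*Real.pi := by ring
    have h4 : (2*Real.pi) - -(2*Real.pi) = 4*Real.pi := by ring
    rw [this, h4] at h2
    exact h2
  have hIntBig : IntervalIntegrable G volume (-(2*Real.pi)) (4*Real.pi) :=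
    (hIntLeft.trans G_int).trans hIntRight
  have hαmem := Complex.arg_mem_Ioc w
  have hIntShift : IntervalIntegrable G volume (-α) (2*Real.pi - α) := by
    apply hIntBig.mono_set
    rw [Set.uIcc_of_le (by linarith [hαmem.1, hαmem.2]),
      Set.uIcc_of_le (by linarith [hαmem.1, hαmem.2])]
    apply Set.Icc_subset_Icc <;> [skip; skip] <;> linarith [hαmem.1, hαmem.2]
  constructor
  · have h2 := hIntShift.comp_sub_right α
    have hb1 : -α + α = 0 := by ring
    have hb2 : 2*Real.pi - α + α = 2*Real.pi := by ring
    rw [hb1, hb2] at h2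
    have hfe : (fun θ : ℝ => Real.log (Complex.abs (Complex.exp (θ * Complex.I) - w)))
        = fun x => G (x - α) := funext hfun
    rw [hfe]
    exact h2
  · rw [intervalIntegral.integral_congr (fun θ _ => hfun θ)]
    have h3 := intervalIntegral.integral_comp_sub_right (a := (0:ℝ)) (b := 2*Real.pi)
      (f := G) α
    rw [zero_sub, show 2*Real.pi - α = -α + 2*Real.pi by ring] at h3
    have h4 := Function.Periodic.intervalIntegral_add_eq G_periodic (-α) 0
    rw [zero_add] at h4
    rw [h3, h4, G_integral_zero]

lemma circle_int_ge {w : ℂ} (hw : 1 ≤ Complex.abs w) :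
    IntervalIntegrable (fun θ : ℝ => Real.log (Complex.abs (Complex.exp (θ * Complex.I) - w)))
      volume 0 (2*Real.pi) ∧
    ∫ θ in (0:ℝ)..(2*Real.pi), Real.log (Complex.abs (Complex.exp (θ * Complex.I) - w))
      = 2 * Real.pi * Real.log (Complex.abs w) := by
  rcases eq_or_lt_of_le hw with h | h
  · obtain ⟨h1, h2⟩ := circle_eq h.symm
    exact ⟨h1, by rw [h2, ← h, Real.log_one, mul_zero]⟩
  · exact circle_gt h

lemma circle_int_le {w : ℂ} (hw : Complex.abs w ≤ 1) :
    IntervalIntegrable (fun θ : ℝ => Real.log (Complex.abs (Complex.exp (θ * Complex.I) - w)))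
      volume 0 (2*Real.pi) ∧
    ∫ θ in (0:ℝ)..(2*Real.pi), Real.log (Complex.abs (Complex.exp (θ * Complex.I) - w)) = 0 := by
  rcases eq_or_lt_of_le hw with h | h
  · exact circle_eq h
  · exact circle_lt h

/-- for `|z| ≥ 1` and `q = (z + z⁻¹)/2`,
`(1/2π)·∫₀^{2π} log|cos θ - q| dθ = log|z| - log 2`. -/
theorem stmt13 (z : ℂ) (hz : 1 ≤ ‖z‖) (q : ℂ) (hq : q = (z + z⁻¹) / 2) :
    (1 / (2 * Real.pi)) *
        ∫ θ in (0 : ℝ)..(2 * Real.pi), Real.log ‖(Real.cos θ : ℂ) - q‖ =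
      Real.log ‖z‖ - Real.log 2 := by
  replace hz : 1 ≤ Complex.abs z := hz
  change (1 / (2 * Real.pi)) *
        ∫ θ in (0 : ℝ)..(2 * Real.pi), Real.log (Complex.abs ((Real.cos θ : ℂ) - q)) =
      Real.log (Complex.abs z) - Real.log 2
  have hpi := Real.pi_pos
  have hz0 : z ≠ 0 := by
    intro h; rw [h] at hz; simp at hz; linarith
  have hzinv : Complex.abs z⁻¹ ≤ 1 := by
    rw [map_inv₀]
    exact inv_le_one_of_one_le₀ hz
  obtain ⟨hint1, hval1⟩ := circle_int_ge hz
  obtain ⟨hint2, hval2⟩ := circle_int_le hzinv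
  -- a.e. pointwise identity
  have hbad : volume ({θ : ℝ | Complex.exp (θ * Complex.I) = z}
      ∪ {θ : ℝ | Complex.exp (θ * Complex.I) = z⁻¹}) = 0 :=
    Set.Countable.measure_zero ((expEqCountable z).union (expEqCountable z⁻¹)) _
  have hae : ∀ᵐ θ ∂volume, θ ∈ Set.uIoc (0:ℝ) (2*Real.pi) →
      Real.log (Complex.abs ((Real.cos θ : ℂ) - q))
        = Real.log (Complex.abs (Complex.exp (θ * Complex.I) - z))
          + Real.log (Complex.abs (Complex.exp (θ * Complex.I) - z⁻¹)) - Real.log 2 := by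
    filter_upwards [measure_eq_zero_iff_ae_notMem.mp hbad] with θ hθ _
    have h1 : Complex.exp (θ * Complex.I) ≠ z := fun hc => hθ (Or.inl hc)
    have h2 : Complex.exp (θ * Complex.I) ≠ z⁻¹ := fun hc => hθ (Or.inr hc)
    have he : Complex.exp (θ * Complex.I) ≠ 0 := Complex.exp_ne_zero _
    have hfac : (Real.cos θ : ℂ) - q
        = (Complex.exp (θ * Complex.I) - z) * (Complex.exp (θ * Complex.I) - z⁻¹)
          / (2 * Complex.exp (θ * Complex.I)) := by
      rw [Complex.ofReal_cos, Complex.cos, hq, neg_mul, Complex.exp_neg]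
      field_simp
      ring
    have habs : Complex.abs ((Real.cos θ : ℂ) - q)
        = Complex.abs (Complex.exp (θ * Complex.I) - z)
          * Complex.abs (Complex.exp (θ * Complex.I) - z⁻¹) / 2 := by
      rw [hfac, map_div₀, map_mul, map_mul, Complex.abs_two, Complex.abs_exp_ofReal_mul_I,
        mul_one]
    have ha : Complex.abs (Complex.exp (θ * Complex.I) - z) ≠ 0 := by
      simpa [sub_eq_zero] using h1
    have hb : Complex.abs (Complex.exp (θ * Complex.I) - z⁻¹) ≠ 0 := by
      simpa [sub_eq_zero] using h2
    rw [habs, Real.log_div (mul_ne_zero ha hb) two_ne_zero, Real.log_mul ha hb]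
  rw [intervalIntegral.integral_congr_ae hae]
  rw [intervalIntegral.integral_sub (hint1.add hint2)
    (intervalIntegrable_const : IntervalIntegrable _ volume _ _)]
  rw [intervalIntegral.integral_add hint1 hint2]
  rw [hval1, hval2, intervalIntegral.integral_const, add_zero, smul_eq_mul, sub_zero]
  field_simp
end
end

section
/- Let g, h ∈ 𝒪[X] and let f(X) = g(Xᵖ) + p·h(X) be monic of degree d ≥ 2 with coefficients in 𝒪. Then any two distinct periodic points ζ ≠ ξ of f satisfy |ζ − ξ| = 1. -/
open Polynomial

section Aux

variable {K : Type*} [NormedField K] [IsUltrametricDist K]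

private lemma aux_norm_sub_le_one {x y : K} (hx : ‖x‖ ≤ 1) (hy : ‖y‖ ≤ 1) :
    ‖x - y‖ ≤ 1 := by
  rw [sub_eq_add_neg]
  exact (IsUltrametricDist.norm_add_le_max x (-y)).trans (by
    rw [norm_neg]; exact max_le hx hy)

private lemma aux_norm_add_eq_right {a b : K} (hab : ‖a‖ < ‖b‖) : ‖a + b‖ = ‖b‖ := by
  refine le_antisymm ((IsUltrametricDist.norm_add_le_max a b).trans (max_le hab.le le_rfl)) ?_
  have h1 : ‖b‖ ≤ max ‖a + b‖ ‖a‖ := by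
    simpa [add_comm] using IsUltrametricDist.norm_add_le_max (a + b) (-a)
  rcases max_cases ‖a + b‖ ‖a‖ with ⟨he, _⟩ | ⟨he, _⟩
  · rwa [he] at h1
  · rw [he] at h1; exact absurd (lt_of_lt_of_le hab h1) (lt_irrefl _)

private lemma aux_eval_le_one {q : K[X]} (hq : ∀ i, ‖q.coeff i‖ ≤ 1) {x : K}
    (hx : ‖x‖ ≤ 1) : ‖q.eval x‖ ≤ 1 := by
  rw [Polynomial.eval_eq_sum_range]
  refine IsUltrametricDist.norm_sum_le_of_forall_le_of_nonneg zero_le_one fun i _ => ?_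
  rw [norm_mul, norm_pow]
  exact mul_le_one₀ (hq i) (pow_nonneg (norm_nonneg _) _) (pow_le_one₀ (norm_nonneg _) hx)

private lemma aux_pow_sub_pow {x y : K} (hx : ‖x‖ ≤ 1) (hy : ‖y‖ ≤ 1) (n : ℕ) :
    ‖x ^ n - y ^ n‖ ≤ ‖x - y‖ := by
  induction n with
  | zero => simp
  | succ n ih =>
    have key : x ^ (n + 1) - y ^ (n + 1) = x * (x ^ n - y ^ n) + (x - y) * y ^ n := by ring
    rw [key]
    refine (IsUltrametricDist.norm_add_le_max _ _).trans (max_le ?_ ?_)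
    · rw [norm_mul]
      calc ‖x‖ * ‖x ^ n - y ^ n‖ ≤ 1 * ‖x - y‖ :=
        mul_le_mul hx ih (norm_nonneg _) zero_le_one
      _ = ‖x - y‖ := one_mul _
    · rw [norm_mul, norm_pow]
      calc ‖x - y‖ * ‖y‖ ^ n ≤ ‖x - y‖ * 1 :=
        mul_le_mul_of_nonneg_left (pow_le_one₀ (norm_nonneg _) hy) (norm_nonneg _)
      _ = ‖x - y‖ := mul_one _

private lemma aux_eval_sub_eval {q : K[X]} (hq : ∀ i, ‖q.coeff i‖ ≤ 1) {x y : K}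
    (hx : ‖x‖ ≤ 1) (hy : ‖y‖ ≤ 1) : ‖q.eval x - q.eval y‖ ≤ ‖x - y‖ := by
  rw [Polynomial.eval_eq_sum_range, Polynomial.eval_eq_sum_range, ← Finset.sum_sub_distrib]
  refine IsUltrametricDist.norm_sum_le_of_forall_le_of_nonneg (norm_nonneg _) fun i _ => ?_
  have : q.coeff i * x ^ i - q.coeff i * y ^ i = q.coeff i * (x ^ i - y ^ i) := by ring
  rw [this, norm_mul]
  calc ‖q.coeff i‖ * ‖x ^ i - y ^ i‖ ≤ 1 * ‖x - y‖ :=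
    mul_le_mul (hq i) (aux_pow_sub_pow hx hy i) (norm_nonneg _) zero_le_one
  _ = ‖x - y‖ := one_mul _

private lemma aux_pow_p_sub {p : ℕ} (hp : p.Prime) {x y : K} (hx : ‖x‖ ≤ 1) (hy : ‖y‖ ≤ 1) :
    ‖x ^ p - y ^ p‖ ≤ max (‖(p : K)‖ * ‖x - y‖) (‖x - y‖ ^ p) := by
  have ht1 : ‖x - y‖ ≤ 1 := aux_norm_sub_le_one hx hy
  have hC : (0 : ℝ) ≤ max (‖(p : K)‖ * ‖x - y‖) (‖x - y‖ ^ p) :=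
    le_max_of_le_right (pow_nonneg (norm_nonneg _) _)
  have hxp : x ^ p = ∑ k ∈ Finset.range (p + 1), y ^ k * (x - y) ^ (p - k) * (p.choose k : K) := by
    have : x = y + (x - y) := by ring
    conv_lhs => rw [this, add_pow]
  have hsum : x ^ p - y ^ p
      = ∑ k ∈ Finset.range p, y ^ k * (x - y) ^ (p - k) * (p.choose k : K) := by
    rw [hxp, Finset.sum_range_succ]
    simp
  rw [hsum]
  refine IsUltrametricDist.norm_sum_le_of_forall_le_of_nonneg hC fun k hk => ?_
  rw [Finset.mem_range] at hk
  rcases Nat.eq_zero_or_pos k with rfl | hk0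
  · simp only [pow_zero, one_mul, Nat.choose_zero_right, Nat.cast_one, mul_one, Nat.sub_zero]
    exact le_max_of_le_right (norm_pow _ _).le
  · obtain ⟨m, hm⟩ := hp.dvd_choose_self hk0.ne' hk
    refine le_max_of_le_left ?_
    rw [norm_mul, norm_mul, norm_pow, norm_pow, hm]
    push_cast
    rw [norm_mul]
    have h1 : ‖y‖ ^ k ≤ 1 := pow_le_one₀ (norm_nonneg _) hy
    have h2 : ‖x - y‖ ^ (p - k) ≤ ‖x - y‖ := by
      have : ‖x - y‖ ^ (p - k) ≤ ‖x - y‖ ^ 1 :=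
        pow_le_pow_of_le_one (norm_nonneg _) ht1 (by omega)
      simpa using this
    have h3 : ‖(m : K)‖ ≤ 1 := IsUltrametricDist.norm_natCast_le_one K m
    calc ‖y‖ ^ k * ‖x - y‖ ^ (p - k) * (‖(p : K)‖ * ‖(m : K)‖)
        ≤ 1 * ‖x - y‖ * (‖(p : K)‖ * 1) := by
          refine mul_le_mul (mul_le_mul h1 h2 (pow_nonneg (norm_nonneg _) _) zero_le_one)
            (mul_le_mul_of_nonneg_left h3 (norm_nonneg _)) ?_ (by positivity)
          positivity
      _ = ‖(p : K)‖ * ‖x - y‖ := by ring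

end Aux

/-- if `f(X) = g(Xᵖ) + p·h(X)` is monic of degree `d ≥ 2` with `g, h`
having integral coefficients, then any two distinct periodic points `ζ ≠ ξ` of `f`
satisfy `‖ζ - ξ‖ = 1`. -/
theorem stmt17 {K : Type*} [NormedField K] [IsUltrametricDist K] [CompleteSpace K]
    [IsAlgClosed K] [CharZero K]
    (p : ℕ) (hp : p.Prime) (hpK : ‖(p : K)‖ = (p : ℝ)⁻¹)
    (g h : K[X]) (hg : ∀ i, ‖g.coeff i‖ ≤ 1) (hh : ∀ i, ‖h.coeff i‖ ≤ 1)
    (f : K[X]) (hf : f = g.comp (X ^ p) + (p : K[X]) * h)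
    (hmonic : f.Monic) (d : ℕ) (hd : 2 ≤ d) (hdeg : f.natDegree = d)
    (ζ ξ : K) (hζ : ζ ∈ Function.periodicPts (fun x => f.eval x))
    (hξ : ξ ∈ Function.periodicPts (fun x => f.eval x)) (hne : ζ ≠ ξ) :
    ‖ζ - ξ‖ = 1 := by
  have hppos : 0 < p := hp.pos
  have hpK_le : ‖(p : K)‖ ≤ 1 := IsUltrametricDist.norm_natCast_le_one K p
  have hpK_lt : ‖(p : K)‖ < 1 := by
    rw [hpK]
    rw [inv_lt_one_iff₀]
    right
    exact_mod_cast hp.one_lt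
  -- Coefficient bound for f
  have hF : ∀ i, ‖f.coeff i‖ ≤ 1 := by
    intro i
    rw [hf, Polynomial.coeff_add]
    refine (IsUltrametricDist.norm_add_le_max _ _).trans (max_le ?_ ?_)
    · rw [Polynomial.comp_eq_sum_left, Polynomial.sum_def, Polynomial.finset_sum_coeff]
      refine IsUltrametricDist.norm_sum_le_of_forall_le_of_nonneg zero_le_one fun e _ => ?_
      rw [← pow_mul, Polynomial.coeff_C_mul, Polynomial.coeff_X_pow]
      split
      · simpa using hg e
      · simp
    · rw [← Polynomial.C_eq_natCast, Polynomial.coeff_C_mul, norm_mul]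
      calc ‖(p : K)‖ * ‖h.coeff i‖ ≤ 1 * 1 :=
        mul_le_mul hpK_le (hh i) (norm_nonneg _) zero_le_one
      _ = 1 := one_mul 1
  -- evaluation of f
  have heval : ∀ x : K, f.eval x = g.eval (x ^ p) + (p : K) * h.eval x := by
    intro x
    rw [hf]
    simp [Polynomial.eval_comp]
  -- growth outside the unit ball
  have hgrow : ∀ x : K, 1 < ‖x‖ → ‖f.eval x‖ = ‖x‖ ^ d := by
    intro x hx
    have hx0 : (0 : ℝ) ≤ ‖x‖ := norm_nonneg _
    have hsplit : f.eval x = (∑ i ∈ Finset.range d, f.coeff i * x ^ i) + x ^ d := by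
      rw [Polynomial.eval_eq_sum_range, hdeg, Finset.sum_range_succ, ← hdeg,
        hmonic.coeff_natDegree, hdeg, one_mul]
    rw [hsplit]
    have hsmall : ‖∑ i ∈ Finset.range d, f.coeff i * x ^ i‖ < ‖x ^ d‖ := by
      rw [norm_pow]
      have hd1 : (0:ℕ) < d := by omega
      refine lt_of_le_of_lt (IsUltrametricDist.norm_sum_le_of_forall_le_of_nonneg
        (C := ‖x‖ ^ (d - 1)) (pow_nonneg hx0 _) fun i hi => ?_) ?_
      · rw [Finset.mem_range] at hi
        rw [norm_mul, norm_pow]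
        calc ‖f.coeff i‖ * ‖x‖ ^ i ≤ 1 * ‖x‖ ^ (d - 1) := by
              refine mul_le_mul (hF i) (pow_le_pow_right₀ hx.le (by omega)) ?_ zero_le_one
              positivity
          _ = ‖x‖ ^ (d - 1) := one_mul _
      · exact pow_lt_pow_right₀ hx (by omega)
    rw [aux_norm_add_eq_right hsmall, norm_pow]
  -- periodic points are in the unit ball
  have hball : ∀ x : K, x ∈ Function.periodicPts (fun x => f.eval x) → ‖x‖ ≤ 1 := by
    intro x hxmem
    obtain ⟨n, hn, hper⟩ := hxmem
    by_contra hgt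
    push_neg at hgt
    have hiter : ∀ k : ℕ, ‖x‖ ≤ ‖(fun y => f.eval y)^[k] x‖ := by
      intro k
      induction k with
      | zero => simp
      | succ k ih =>
        rw [Function.iterate_succ_apply']
        have h1 : 1 < ‖(fun y => f.eval y)^[k] x‖ := lt_of_lt_of_le hgt ih
        calc ‖x‖ ≤ ‖(fun y => f.eval y)^[k] x‖ := ih
          _ ≤ ‖(fun y => f.eval y)^[k] x‖ ^ d := le_self_pow₀ h1.le (by omega)
          _ = ‖f.eval ((fun y => f.eval y)^[k] x)‖ := (hgrow _ h1).symm
    obtain ⟨m, rfl⟩ : ∃ m, n = m + 1 := ⟨n - 1, by omega⟩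
    have hx1 : 1 < ‖(fun y => f.eval y)^[m] x‖ := lt_of_lt_of_le hgt (hiter m)
    have : ‖x‖ < ‖(fun y => f.eval y)^[m + 1] x‖ := by
      rw [Function.iterate_succ_apply']
      calc ‖x‖ ≤ ‖(fun y => f.eval y)^[m] x‖ := hiter m
        _ < ‖(fun y => f.eval y)^[m] x‖ ^ d := by
            calc ‖(fun y => f.eval y)^[m] x‖ = ‖(fun y => f.eval y)^[m] x‖ ^ 1 := (pow_one _).symm
              _ < ‖(fun y => f.eval y)^[m] x‖ ^ d := pow_lt_pow_right₀ hx1 (by omega)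
        _ = ‖f.eval ((fun y => f.eval y)^[m] x)‖ := (hgrow _ hx1).symm
    rw [hper] at this
    exact absurd this (lt_irrefl _)
  have hζ1 : ‖ζ‖ ≤ 1 := hball ζ hζ
  have hξ1 : ‖ξ‖ ≤ 1 := hball ξ hξ
  have hr_le : ‖ζ - ξ‖ ≤ 1 := aux_norm_sub_le_one hζ1 hξ1
  have hr_pos : 0 < ‖ζ - ξ‖ := by
    rw [norm_pos_iff, sub_ne_zero]; exact hne
  refine le_antisymm hr_le ?_
  by_contra hlt
  push_neg at hlt
  set r := ‖ζ - ξ‖ with hr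
  -- the contraction factor
  set c := max ‖(p : K)‖ (r ^ (p - 1)) with hc
  have hc0 : 0 ≤ c := le_trans (norm_nonneg _) (le_max_left _ _)
  have hc1 : c < 1 := max_lt hpK_lt (pow_lt_one₀ hr_pos.le hlt (Nat.sub_ne_zero_of_lt hp.one_lt))
  -- one-step contraction
  have hstep : ∀ x y : K, ‖x‖ ≤ 1 → ‖y‖ ≤ 1 → ‖x - y‖ ≤ r →
      ‖f.eval x - f.eval y‖ ≤ c * ‖x - y‖ := by
    intro x y hx hy hxy
    have hxy1 : ‖x - y‖ ≤ 1 := le_trans hxy hr_le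
    have hsum : f.eval x - f.eval y
        = (g.eval (x ^ p) - g.eval (y ^ p)) + (p : K) * (h.eval x - h.eval y) := by
      rw [heval, heval]; ring
    rw [hsum]
    refine (IsUltrametricDist.norm_add_le_max _ _).trans (max_le ?_ ?_)
    · have hxp : ‖x ^ p‖ ≤ 1 := by rw [norm_pow]; exact pow_le_one₀ (norm_nonneg _) hx
      have hyp : ‖y ^ p‖ ≤ 1 := by rw [norm_pow]; exact pow_le_one₀ (norm_nonneg _) hy
      refine (aux_eval_sub_eval hg hxp hyp).trans ?_
      refine (aux_pow_p_sub hp hx hy).trans (max_le ?_ ?_)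
      · exact mul_le_mul_of_nonneg_right (le_max_left _ _) (norm_nonneg _)
      · have hpp : p = (p - 1) + 1 := (Nat.succ_pred_eq_of_pos hppos).symm
        calc ‖x - y‖ ^ p = ‖x - y‖ ^ (p - 1) * ‖x - y‖ := by
              conv_lhs => rw [hpp, pow_succ]
          _ ≤ r ^ (p - 1) * ‖x - y‖ :=
              mul_le_mul_of_nonneg_right (pow_le_pow_left₀ (norm_nonneg _) hxy _) (norm_nonneg _)
          _ ≤ c * ‖x - y‖ := mul_le_mul_of_nonneg_right (le_max_right _ _) (norm_nonneg _)
    · rw [norm_mul]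
      exact mul_le_mul (le_max_left _ _) (aux_eval_sub_eval hh hx hy)
        (norm_nonneg _) hc0
  -- f maps the unit ball to itself
  have hmap : ∀ x : K, ‖x‖ ≤ 1 → ‖f.eval x‖ ≤ 1 := fun x hx => aux_eval_le_one hF hx
  -- iterated contraction
  have hiter : ∀ k : ℕ, ‖(fun y => f.eval y)^[k] ζ‖ ≤ 1 ∧ ‖(fun y => f.eval y)^[k] ξ‖ ≤ 1 ∧
      ‖(fun y => f.eval y)^[k] ζ - (fun y => f.eval y)^[k] ξ‖ ≤ c ^ k * r := by
    intro k
    induction k with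
    | zero => exact ⟨hζ1, hξ1, by simpa using hr.ge⟩
    | succ k ih =>
      obtain ⟨h1, h2, h3⟩ := ih
      have hck : c ^ k ≤ 1 := pow_le_one₀ hc0 hc1.le
      have hle_r : ‖(fun y => f.eval y)^[k] ζ - (fun y => f.eval y)^[k] ξ‖ ≤ r :=
        h3.trans (by nlinarith)
      refine ⟨?_, ?_, ?_⟩
      · rw [Function.iterate_succ_apply']; exact hmap _ h1
      · rw [Function.iterate_succ_apply']; exact hmap _ h2
      · rw [Function.iterate_succ_apply', Function.iterate_succ_apply']
        calc ‖f.eval ((fun y => f.eval y)^[k] ζ) - f.eval ((fun y => f.eval y)^[k] ξ)‖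
            ≤ c * ‖(fun y => f.eval y)^[k] ζ - (fun y => f.eval y)^[k] ξ‖ :=
              hstep _ _ h1 h2 hle_r
          _ ≤ c * (c ^ k * r) := mul_le_mul_of_nonneg_left h3 hc0
          _ = c ^ (k + 1) * r := by ring
  -- common period
  obtain ⟨m, hm, hperζ⟩ := hζ
  obtain ⟨n, hn, hperξ⟩ := hξ
  have hperζ' : (fun y => f.eval y)^[m * n] ζ = ζ := hperζ.mul_const n
  have hperξ' : (fun y => f.eval y)^[m * n] ξ = ξ := hperξ.const_mul m
  have hmn : m * n ≠ 0 := by positivity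
  have := (hiter (m * n)).2.2
  rw [hperζ', hperξ'] at this
  have hcontr : c ^ (m * n) * r < r := by
    have : c ^ (m * n) < 1 := pow_lt_one₀ hc0 hc1 hmn
    nlinarith
  exact absurd (this.trans_lt hcontr) (lt_irrefl _)
end
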